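/- arXiv:1811.00896 — 3 statements merged into one kernel-verified Lean document; each statement's English description precedes it below -/
import Mathlib

section
/- Let F_q be the finite field of characteristic p with q elements, q ≥ 9, and let n = p^ℓ·m with ℓ ≥ 1, m even, 1 ≤ m < 2q², gcd(m, p) = 1, and q−1 not dividing m. Then CN_q(n) ≥ q^n · (1/2 + 1/(q+1) − 0.96·m/q²). -/
open Polynomial

/-- `x` is a normal element of `E` over the subfield `K` (of cardinality `q ^ l`, `l ∣ n`):
its conjugates `x, x^(q^l), …, x^(q^(l(n/l-1)))` form a `K`-basis of `E`. -/
def IsNormalElementOver (q l n : ℕ) {E : Type} [Field E] (K : Subfield E) (x : E) : Prop :=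
  ∃ B : Module.Basis (Fin (n / l)) K E, ∀ i : Fin (n / l), B i = x ^ (q ^ l) ^ (i : ℕ)

/-- `x ∈ E = F_{q^n}` is completely normal over `F_q`: for every divisor `l` of `n`,
`x` is normal over the intermediate field with `q ^ l` elements. -/
def IsCompletelyNormal (q n : ℕ) {E : Type} [Field E] (x : E) : Prop :=
  ∀ l : ℕ, l ∣ n → ∀ K : Subfield E, Nat.card K = q ^ l → IsNormalElementOver q l n K x

/-- `x` is a primitive element: it generates the multiplicative group `Eˣ`. -/
def IsPrimitiveElement {E : Type} [Field E] (x : E) : Prop :=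
  ∀ y : E, y ≠ 0 → ∃ k : ℕ, x ^ k = y

/-- `x` is `r`-free: `x = y ^ d` with `d ∣ r` forces `d = 1`. -/
def IsFree {E : Type} [Field E] (r : ℕ) (x : E) : Prop :=
  ∀ d : ℕ, d ∣ r → (∃ y : E, x = y ^ d) → d = 1

/-- `CN_q(n)`: the number of completely normal elements of `E = F_{q^n}` over `F_q`. -/
noncomputable def CN (q n : ℕ) (E : Type) [Field E] : ℕ :=
  Nat.card {x : E // IsCompletelyNormal q n x}

/-- `CN_q^r(n)`: the number of `r`-free completely normal elements of `E = F_{q^n}` over `F_q`. -/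
noncomputable def CNfree (q n r : ℕ) (E : Type) [Field E] : ℕ :=
  Nat.card {x : E // IsFree r x ∧ IsCompletelyNormal q n x}

/-- `PCN_q(n)`: the number of primitive completely normal elements. -/
noncomputable def PCN (q n : ℕ) (E : Type) [Field E] : ℕ :=
  Nat.card {x : E // IsPrimitiveElement x ∧ IsCompletelyNormal q n x}

/-- The polynomial Euler function: `polyPhi f` is the number of units of `K[X] ⧸ (f)`. -/
noncomputable def polyPhi {K : Type} [Field K] (f : K[X]) : ℕ :=
  Nat.card (K[X] ⧸ Ideal.span {f})ˣ

/-- The number of monic divisors of `f` in `K[X]`. -/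
noncomputable def Wpoly {K : Type} [Field K] (f : K[X]) : ℕ :=
  Nat.card {g : K[X] // g.Monic ∧ g ∣ f}

/-- The squarefree part of the positive integer `N`: the product of its distinct prime factors. -/
def natSqfreePart (N : ℕ) : ℕ := ∏ p ∈ N.primeFactors, p

/-- `IsSqfreePartOf F f`: `F` is the (monic) squarefree part of `f` in `K[X]`. -/
def IsSqfreePartOf {K : Type} [Field K] (F f : K[X]) : Prop :=
  F.Monic ∧ Squarefree F ∧ F ∣ f ∧ ∀ g : K[X], Irreducible g → g ∣ f → g ∣ F


section Setup
variable {E : Type} [Field E] [Fintype E] (K : Subfield E)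

noncomputable instance : Fintype K := Fintype.ofFinite K

example (c : K) (y : E) : c • y = ↑c * y := rfl

lemma subfield_char : ∃ p s : ℕ, Nat.Prime p ∧ Fintype.card K = p ^ s ∧ 0 < s ∧ CharP E p := by
  have h1 : CharP E (ringChar E) := ringChar.charP E
  have h2 : CharP K (ringChar E) := RingHom.charP K.subtype Subtype.coe_injective _
  obtain ⟨s, hp, hcard⟩ := FiniteField.card K (ringChar E)
  exact ⟨ringChar E, s, hp, hcard, s.2, h1⟩

/-- The `K`-linear Frobenius `x ↦ x ^ |K|` on `E`. -/
noncomputable def frobK : E →ₗ[K] E where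
  toFun x := x ^ Fintype.card K
  map_add' x y := by
    obtain ⟨p, s, hp, hcard, -, hchar⟩ := subfield_char K
    haveI := Fact.mk hp
    rw [hcard]
    exact add_pow_char_pow x y p s
  map_smul' c x := by
    have h : ((c : E)) ^ Fintype.card K = (c : E) := by
      have := FiniteField.pow_card c
      calc ((c : E)) ^ Fintype.card K = ((c ^ Fintype.card K : K) : E) := by push_cast; ring
        _ = (c : E) := by rw [this]
    show (↑c * x) ^ Fintype.card K = ↑c * x ^ Fintype.card K
    rw [mul_pow, h]

lemma frobK_apply (x : E) : frobK K x = x ^ Fintype.card K := rfl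

lemma frobK_pow_apply (i : ℕ) (x : E) : (frobK K ^ i) x = x ^ (Fintype.card K) ^ i := by
  induction i generalizing x with
  | zero => simp
  | succ j ih =>
    rw [pow_succ', Module.End.mul_apply, frobK_apply, ih, ← pow_mul]; ring_nf

end Setup
section KerCount
variable {E : Type} [Field E] [Fintype E] (K : Subfield E)

/-- `aeval` of the Frobenius at a polynomial, applied to `x`, as a sum. -/
lemma aeval_frobK_apply (f : K[X]) (x : E) :
    aeval (frobK K) f x =
      ∑ i ∈ Finset.range (f.natDegree + 1), (f.coeff i : E) * x ^ (Fintype.card K) ^ i := by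
  rw [Polynomial.aeval_eq_sum_range]
  rw [LinearMap.sum_apply]
  refine Finset.sum_congr rfl fun i _ => ?_
  rw [LinearMap.smul_apply, frobK_pow_apply]
  rfl

/-- The linearized polynomial of `f` over `E`. -/
noncomputable def linE (f : K[X]) : E[X] :=
  ∑ i ∈ Finset.range (f.natDegree + 1), C ((f.coeff i : E)) * X ^ (Fintype.card K) ^ i

lemma linE_eval (f : K[X]) (x : E) : (linE K f).eval x = aeval (frobK K) f x := by
  rw [aeval_frobK_apply, linE, Polynomial.eval_finset_sum]
  refine Finset.sum_congr rfl fun i _ => ?_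
  simp

lemma linE_split (hQ : 2 ≤ Fintype.card K) {f : K[X]} (hf : f.Monic) :
    linE K f = (∑ i ∈ Finset.range f.natDegree,
      C ((f.coeff i : E)) * X ^ (Fintype.card K) ^ i) + X ^ (Fintype.card K) ^ f.natDegree ∧
    (∑ i ∈ Finset.range f.natDegree,
      C ((f.coeff i : E)) * X ^ (Fintype.card K) ^ i).degree
        < (X ^ (Fintype.card K) ^ f.natDegree : E[X]).degree := by
  constructor
  · rw [linE, Finset.sum_range_succ, hf.coeff_natDegree]
    push_cast
    rw [map_one, one_mul]
  · rw [degree_X_pow]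
    refine (degree_sum_le _ _).trans_lt ((Finset.sup_lt_iff (WithBot.bot_lt_coe _)).mpr ?_)
    intro i hi
    refine (degree_C_mul_X_pow_le _ _).trans_lt ?_
    exact_mod_cast Nat.pow_lt_pow_right hQ (Finset.mem_range.mp hi)

lemma linE_monic (hQ : 2 ≤ Fintype.card K) {f : K[X]} (hf : f.Monic) : (linE K f).Monic := by
  obtain ⟨h1, h2⟩ := linE_split K hQ hf
  rw [h1]
  exact (monic_X_pow _).add_of_right h2

lemma linE_natDegree (hQ : 2 ≤ Fintype.card K) {f : K[X]} (hf : f.Monic) :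
    (linE K f).natDegree = (Fintype.card K) ^ f.natDegree := by
  obtain ⟨h1, h2⟩ := linE_split K hQ hf
  rw [h1]
  rw [natDegree_eq_of_degree_eq_some]
  rw [degree_add_eq_right_of_degree_lt h2, degree_X_pow]

end KerCount
set_option linter.unusedSectionVars false
set_option maxHeartbeats 1000000
set_option synthInstance.maxHeartbeats 400000

section KerCard
variable {E : Type} [Field E] [Fintype E] [DecidableEq E] (K : Subfield E)

lemma aeval_frobK_mul_apply (f g : K[X]) (x : E) :
    aeval (frobK K) (f * g) x = aeval (frobK K) f (aeval (frobK K) g x) := by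
  rw [map_mul]; rfl

lemma monic_X_pow_sub_one {N : ℕ} (hN : 0 < N) : ((X : K[X]) ^ N - 1).Monic := by
  have := monic_X_pow_sub_C (1 : K) hN.ne'
  rwa [map_one] at this

lemma aeval_frobK_X_pow_sub_one {N : ℕ}
    (hE : Fintype.card E = Fintype.card K ^ N) (x : E) :
    aeval (frobK K) ((X : K[X]) ^ N - 1) x = 0 := by
  have h : aeval (frobK K) ((X : K[X]) ^ N - 1) = frobK K ^ N - 1 := by
    rw [map_sub, map_pow, aeval_X, map_one]
  rw [h, LinearMap.sub_apply, Module.End.one_apply,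
    frobK_pow_apply, ← hE, FiniteField.pow_card, sub_self]

lemma card_ker_aeval_le {f : K[X]} (hf : f.Monic) :
    Nat.card (LinearMap.ker (aeval (frobK K) f)) ≤ Fintype.card K ^ f.natDegree := by
  have hQ2 : 2 ≤ Fintype.card K := Fintype.one_lt_card
  have hne : linE K f ≠ 0 := (linE_monic K hQ2 hf).ne_zero
  have hsub : (LinearMap.ker (aeval (frobK K) f) : Set E) ⊆ ↑(linE K f).roots.toFinset := by
    intro x hx
    simp only [SetLike.mem_coe, LinearMap.mem_ker] at hx
    rw [Finset.mem_coe, Multiset.mem_toFinset, mem_roots']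
    exact ⟨hne, by rw [IsRoot, linE_eval, hx]⟩
  calc Nat.card (LinearMap.ker (aeval (frobK K) f))
      = (LinearMap.ker (aeval (frobK K) f) : Set E).ncard := Nat.card_coe_set_eq _
    _ ≤ ((linE K f).roots.toFinset : Set E).ncard := Set.ncard_le_ncard hsub (Set.toFinite _)
    _ = (linE K f).roots.toFinset.card := Set.ncard_coe_finset _
    _ ≤ Multiset.card (linE K f).roots := Multiset.toFinset_card_le _
    _ ≤ (linE K f).natDegree := card_roots' _
    _ = Fintype.card K ^ f.natDegree := linE_natDegree K hQ2 hf

lemma card_ker_aeval {N : ℕ} (hN : 0 < N) (hE : Fintype.card E = Fintype.card K ^ N)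
    {f : K[X]} (hf : f.Monic) (hdvd : f ∣ (X : K[X]) ^ N - 1) :
    Nat.card (LinearMap.ker (aeval (frobK K) f)) = Fintype.card K ^ f.natDegree := by
  have hQ2 : 2 ≤ Fintype.card K := Fintype.one_lt_card
  obtain ⟨g, hg⟩ := hdvd
  have hXN : ((X : K[X]) ^ N - 1).Monic := monic_X_pow_sub_one K hN
  have hgm : g.Monic := hf.of_mul_monic_left (hg ▸ hXN)
  have hdeg : f.natDegree + g.natDegree = N := by
    have := natDegree_mul hf.ne_zero hgm.ne_zero
    rw [← hg] at this
    have h2 : ((X : K[X]) ^ N - 1).natDegree = N := by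
      simpa using natDegree_X_pow_sub_C (n := N) (r := (1 : K))
    rw [← this, h2]
  -- range (aeval g) ⊆ ker (aeval f)
  have hrange : (LinearMap.range (aeval (frobK K) g) : Set E) ⊆
      (LinearMap.ker (aeval (frobK K) f) : Set E) := by
    rintro - ⟨y, rfl⟩
    simp only [SetLike.mem_coe, LinearMap.mem_ker]
    rw [← aeval_frobK_mul_apply, ← hg, aeval_frobK_X_pow_sub_one K hE]
  have hcards : Nat.card E =
      Nat.card (LinearMap.ker (aeval (frobK K) g)) *
        Nat.card (LinearMap.range (aeval (frobK K) g)) := by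
    rw [Submodule.card_eq_card_quotient_mul_card (LinearMap.ker (aeval (frobK K) g))]
    congr 1
    exact Nat.card_congr (LinearMap.quotKerEquivRange (aeval (frobK K) g)).toEquiv
  have h1 : Nat.card (LinearMap.range (aeval (frobK K) g)) ≤
      Nat.card (LinearMap.ker (aeval (frobK K) f)) :=
    Nat.card_mono (Set.toFinite _) hrange
  have h2 : Nat.card (LinearMap.ker (aeval (frobK K) g)) ≤ Fintype.card K ^ g.natDegree :=
    card_ker_aeval_le K hgm
  have hge : Fintype.card K ^ f.natDegree ≤ Nat.card (LinearMap.ker (aeval (frobK K) f)) := by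
    have hQN : Fintype.card K ^ g.natDegree * Fintype.card K ^ f.natDegree = Nat.card E := by
      rw [Nat.card_eq_fintype_card, hE, ← pow_add, Nat.add_comm, hdeg]
    have hchain : Fintype.card K ^ g.natDegree * Fintype.card K ^ f.natDegree ≤
        Fintype.card K ^ g.natDegree * Nat.card (LinearMap.ker (aeval (frobK K) f)) := by
      rw [hQN, hcards]
      exact Nat.mul_le_mul h2 h1
    exact Nat.le_of_mul_le_mul_left hchain (Nat.pow_pos (by omega))
  exact le_antisymm (card_ker_aeval_le K hf) hge

end KerCard
section Ann
variable {E : Type} [Field E] [Fintype E] [DecidableEq E] (K : Subfield E)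

lemma natDegree_X_pow_sub_one' {N : ℕ} : (((X : K[X]) ^ N - 1)).natDegree = N := by
  simpa using natDegree_X_pow_sub_C (n := N) (r := (1 : K))

/-- The annihilator ideal of `x` under the Frobenius action. -/
noncomputable def annI (x : E) : Ideal K[X] where
  carrier := {P | aeval (frobK K) P x = 0}
  add_mem' := by
    intro a b ha hb
    simp only [Set.mem_setOf_eq] at *
    rw [map_add, LinearMap.add_apply, ha, hb, add_zero]
  zero_mem' := by simp
  smul_mem' := by
    intro c P hP
    simp only [Set.mem_setOf_eq, smul_eq_mul] at *
    rw [aeval_frobK_mul_apply, hP, map_zero]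

lemma mem_annI {x : E} {P : K[X]} : P ∈ annI K x ↔ aeval (frobK K) P x = 0 := Iff.rfl

lemma annI_dvd {N : ℕ} (hN : 0 < N) (hE : Fintype.card E = Fintype.card K ^ N) (x : E)
    (good : ∀ g h : K[X], g.Monic → Irreducible g → g * h = (X : K[X]) ^ N - 1 →
      aeval (frobK K) h x ≠ 0)
    {P : K[X]} (hP : aeval (frobK K) P x = 0) : ((X : K[X]) ^ N - 1) ∣ P := by
  obtain ⟨⟨μ, hμ⟩⟩ := IsPrincipalIdealRing.principal (annI K x)
  have hXN : ((X : K[X]) ^ N - 1) ∈ annI K x := aeval_frobK_X_pow_sub_one K hE x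
  have hXNne : ((X : K[X]) ^ N - 1) ≠ 0 := (monic_X_pow_sub_one K hN).ne_zero
  rw [hμ, Ideal.submodule_span_eq, Ideal.mem_span_singleton] at hXN
  have hμmem : μ ∈ annI K x := by rw [hμ]; exact Ideal.subset_span rfl
  have hμ0 : aeval (frobK K) μ x = 0 := hμmem
  -- show X^N - 1 ∣ μ
  obtain ⟨c, hc⟩ := hXN
  have hdvdμ : ((X : K[X]) ^ N - 1) ∣ μ := by
    by_cases hu : IsUnit c
    · obtain ⟨u, rfl⟩ := hu
      exact ⟨(↑u⁻¹ : K[X]), by rw [hc, mul_assoc, Units.mul_inv, mul_one]⟩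
    · have hcne : c ≠ 0 := by rintro rfl; exact hXNne (by simpa using hc)
      obtain ⟨g, hgirr, hgdvd⟩ := WfDvdMonoid.exists_irreducible_factor hu hcne
      have hgne : g ≠ 0 := hgirr.ne_zero
      have hg'monic : (normalize g).Monic := monic_normalize hgne
      have hg'irr : Irreducible (normalize g) := by
        exact (associated_normalize g).irreducible hgirr
      have hg'dvd : normalize g ∣ c := (normalize_dvd_iff).mpr hgdvd
      obtain ⟨c', hc'⟩ := hg'dvd
      have hgh : normalize g * (μ * c') = (X : K[X]) ^ N - 1 := by
        rw [hc, hc']; ring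
      refine absurd ?_ (good (normalize g) (μ * c') hg'monic hg'irr hgh)
      rw [mul_comm, aeval_frobK_mul_apply, hμ0, map_zero]
  have hPm : P ∈ annI K x := hP
  rw [hμ, Ideal.submodule_span_eq, Ideal.mem_span_singleton] at hPm
  exact hdvdμ.trans hPm

lemma basis_of_good {N : ℕ} (hN : 0 < N) (hE : Fintype.card E = Fintype.card K ^ N) (x : E)
    (good : ∀ g h : K[X], g.Monic → Irreducible g → g * h = (X : K[X]) ^ N - 1 →
      aeval (frobK K) h x ≠ 0) :
    ∃ B : Module.Basis (Fin N) K E, ∀ i : Fin N, B i = x ^ (Fintype.card K) ^ (i : ℕ) := by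
  have hQ2 : 2 ≤ Fintype.card K := Fintype.one_lt_card
  haveI : Nonempty (Fin N) := Fin.pos_iff_nonempty.mp hN
  haveI : Module.Finite K E := Module.Finite.of_finite
  have hfinrank : Module.finrank K E = N := by
    have h2 : Fintype.card K ^ Module.finrank K E = Fintype.card K ^ N := by
      rw [← Module.card_eq_pow_finrank (K := K) (V := E)]; exact hE
    exact Nat.pow_right_injective hQ2 h2
  set v : Fin N → E := fun i => x ^ (Fintype.card K) ^ (i : ℕ) with hv
  have hli : LinearIndependent K v := by
    rw [Fintype.linearIndependent_iff]
    intro c hc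
    set P : K[X] := ∑ j : Fin N, C (c j) * X ^ (j : ℕ) with hP
    have haeval : aeval (frobK K) P x = 0 := by
      rw [hP, map_sum, LinearMap.sum_apply, ← hc]
      refine Finset.sum_congr rfl fun j _ => ?_
      rw [map_mul, aeval_C, map_pow, aeval_X, Module.End.mul_apply,
        Module.algebraMap_end_apply, frobK_pow_apply]
    have hdvd := annI_dvd K hN hE x good haeval
    have hdegP : P.natDegree < N := by
      refine lt_of_le_of_lt (natDegree_sum_le_of_forall_le _ _ fun j _ => ?_)
        (show N - 1 < N by omega)
      refine (natDegree_mul_le).trans ?_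
      simp only [natDegree_C, natDegree_X_pow, zero_add]
      have := j.isLt; omega
    have hP0 : P = 0 := eq_zero_of_dvd_of_natDegree_lt hdvd
      (by rw [natDegree_X_pow_sub_one']; exact hdegP)
    have hco : ∀ i : Fin N, P.coeff (i : ℕ) = c i := by
      intro i
      rw [hP, finset_sum_coeff]
      rw [Finset.sum_eq_single i]
      · rw [coeff_C_mul, coeff_X_pow, if_pos rfl, mul_one]
      · intro b _ hb
        rw [coeff_C_mul, coeff_X_pow, if_neg (fun h => hb (Fin.ext h).symm), mul_zero]
      · exact fun h => absurd (Finset.mem_univ i) h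
    intro i
    rw [← hco i, hP0, coeff_zero]
  refine ⟨basisOfLinearIndependentOfCardEqFinrank hli (by rw [Fintype.card_fin, hfinrank]), ?_⟩
  intro i
  rw [coe_basisOfLinearIndependentOfCardEqFinrank]

end Ann
section CRT
variable {E : Type} [Field E] [Fintype E] [DecidableEq E] (K : Subfield E)

lemma aeval_kill (c w : K[X]) (x : E) (h : aeval (frobK K) w x = 0) :
    aeval (frobK K) (c * w) x = 0 := by
  rw [aeval_frobK_mul_apply, h, map_zero]

lemma coprime_of_monic_irred {g₁ g₂ : K[X]} (h1 : g₁.Monic ∧ Irreducible g₁)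
    (h2 : g₂.Monic ∧ Irreducible g₂) (hne : g₁ ≠ g₂) : IsCoprime g₁ g₂ := by
  rw [h1.2.coprime_iff_not_dvd]
  intro hdvd
  exact hne (eq_of_monic_of_associated h1.1 h2.1 (h1.2.associated_of_dvd h2.2 hdvd))

/-- Count of the `g`-primary block: elements killed by `g^a` but not by `g^(a-1)`. -/
lemma card_block {N a : ℕ} (hN : 0 < N) (ha : 1 ≤ a)
    (hE : Fintype.card E = Fintype.card K ^ N)
    {g : K[X]} (hg : g.Monic ∧ Irreducible g) (hdvd : g ^ a ∣ (X : K[X]) ^ N - 1) :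
    {x : E | aeval (frobK K) (g ^ a) x = 0 ∧ aeval (frobK K) (g ^ (a - 1)) x ≠ 0}.ncard
      = Fintype.card K ^ (a * g.natDegree) - Fintype.card K ^ ((a - 1) * g.natDegree) := by
  have hpow : g * g ^ (a - 1) = g ^ a := by
    rw [← pow_succ']; congr 1; omega
  have hdvd' : g ^ (a - 1) ∣ (X : K[X]) ^ N - 1 :=
    (pow_dvd_pow g (by omega)).trans hdvd
  have hsub : (LinearMap.ker (aeval (frobK K) (g ^ (a - 1))) : Set E) ⊆
      (LinearMap.ker (aeval (frobK K) (g ^ a)) : Set E) := by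
    intro x hx
    simp only [SetLike.mem_coe, LinearMap.mem_ker] at *
    rw [← hpow]
    exact aeval_kill K g _ x hx
  have hset : {x : E | aeval (frobK K) (g ^ a) x = 0 ∧ aeval (frobK K) (g ^ (a - 1)) x ≠ 0}
      = (LinearMap.ker (aeval (frobK K) (g ^ a)) : Set E) \
        (LinearMap.ker (aeval (frobK K) (g ^ (a - 1))) : Set E) := by
    ext x
    simp [LinearMap.mem_ker]
  rw [hset, Set.ncard_diff hsub (Set.toFinite _)]
  have c1 := card_ker_aeval K hN hE (hg.1.pow a) hdvd
  have c2 := card_ker_aeval K hN hE (hg.1.pow (a - 1)) hdvd'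
  rw [natDegree_pow] at c1 c2
  rw [← Nat.card_coe_set_eq, ← Nat.card_coe_set_eq]
  have e1 : Nat.card ↑(LinearMap.ker (aeval (frobK K) (g ^ a)) : Set E)
      = Nat.card (LinearMap.ker (aeval (frobK K) (g ^ a))) := rfl
  have e2 : Nat.card ↑(LinearMap.ker (aeval (frobK K) (g ^ (a - 1))) : Set E)
      = Nat.card (LinearMap.ker (aeval (frobK K) (g ^ (a - 1)))) := rfl
  rw [e1, e2, c1, c2]

end CRT
section CRT2
variable {E : Type} [Field E] [Fintype E] [DecidableEq E] (K : Subfield E)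

lemma count_goodS {N a : ℕ} (hN : 0 < N) (ha : 1 ≤ a)
    (hE : Fintype.card E = Fintype.card K ^ N) (s : Finset K[X]) :
    (∀ g ∈ s, g.Monic ∧ Irreducible g) →
    ((∏ g ∈ s, g ^ a) ∣ (X : K[X]) ^ N - 1) →
    {x : E | aeval (frobK K) (∏ g ∈ s, g ^ a) x = 0 ∧
        ∀ g ∈ s, ∀ h : K[X], g * h = (∏ g' ∈ s, g' ^ a) → aeval (frobK K) h x ≠ 0}.ncard
      = ∏ g ∈ s, (Fintype.card K ^ (a * g.natDegree) - Fintype.card K ^ ((a - 1) * g.natDegree)) := by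
  classical
  induction s using Finset.induction_on with
  | empty =>
    intro _ _
    rw [Finset.prod_empty, Finset.prod_empty]
    have hset : {x : E | aeval (frobK K) (1 : K[X]) x = 0 ∧
        ∀ g ∈ (∅ : Finset K[X]), ∀ h : K[X], g * h = 1 → aeval (frobK K) h x ≠ 0} = {0} := by
      ext x
      simp [map_one]
    rw [hset, Set.ncard_singleton]
  | @insert g₀ s hg₀ ih =>
    intro hs hdvd
    have hg₀m := hs g₀ (Finset.mem_insert_self g₀ s)
    have hs' : ∀ g ∈ s, g.Monic ∧ Irreducible g :=
      fun g hg => hs g (Finset.mem_insert_of_mem hg)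
    set Fs := (∏ g ∈ s, g ^ a) with hFs
    have hprod : (∏ g ∈ insert g₀ s, g ^ a) = g₀ ^ a * Fs := Finset.prod_insert hg₀
    rw [hprod] at hdvd ⊢
    rw [Finset.prod_insert hg₀]
    have hdvd' : Fs ∣ (X : K[X]) ^ N - 1 := (dvd_mul_left Fs (g₀ ^ a)).trans hdvd
    have hdvd₀ : g₀ ^ a ∣ (X : K[X]) ^ N - 1 := (dvd_mul_right _ _).trans hdvd
    have hcop1 : ∀ g ∈ s, IsCoprime g₀ g := fun g hg =>
      coprime_of_monic_irred K hg₀m (hs' g hg) (by rintro rfl; exact hg₀ hg)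
    have cop : IsCoprime (g₀ ^ a) Fs :=
      (IsCoprime.prod_right fun g hg => (hcop1 g hg).pow_right).pow_left
    obtain ⟨u, v, huv⟩ := cop
    have hpow : g₀ * g₀ ^ (a - 1) = g₀ ^ a := by
      rw [← pow_succ']; congr 1; omega
    have hg₀ne : g₀ ≠ 0 := hg₀m.2.ne_zero
    have hsplit : ∀ y : E, aeval (frobK K) (u * g₀ ^ a) y + aeval (frobK K) (v * Fs) y = y := by
      intro y
      have h1 : aeval (frobK K) (u * g₀ ^ a + v * Fs) y = y := by
        rw [huv, map_one, Module.End.one_apply]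
      rw [map_add, LinearMap.add_apply] at h1; exact h1
    set T := {x : E | aeval (frobK K) (g₀ ^ a) x = 0 ∧ aeval (frobK K) (g₀ ^ (a - 1)) x ≠ 0}
      with hT
    set S := {x : E | aeval (frobK K) Fs x = 0 ∧
        ∀ g ∈ s, ∀ h : K[X], g * h = Fs → aeval (frobK K) h x ≠ 0} with hS
    set S' := {x : E | aeval (frobK K) (g₀ ^ a * Fs) x = 0 ∧
        ∀ g ∈ insert g₀ s, ∀ h : K[X], g * h = g₀ ^ a * Fs → aeval (frobK K) h x ≠ 0} with hS'
    have hbij : Set.BijOn (fun x : E =>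
        (aeval (frobK K) (v * Fs) x, aeval (frobK K) (u * g₀ ^ a) x)) S' (T ×ˢ S) := by
      refine ⟨?_, ?_, ?_⟩
      · -- MapsTo
        rintro x ⟨hx0, hxg⟩
        refine ⟨⟨?_, ?_⟩, ?_, ?_⟩
        · -- Φ (g₀^a) (Φ (v*Fs) x) = 0
          rw [← aeval_frobK_mul_apply]
          rw [show g₀ ^ a * (v * Fs) = v * (g₀ ^ a * Fs) by ring]
          exact aeval_kill K v _ x hx0
        · -- Φ (g₀^(a-1)) (Φ (v*Fs) x) ≠ 0
          intro hzero
          rw [← aeval_frobK_mul_apply] at hzero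
          have hgood := hxg g₀ (Finset.mem_insert_self g₀ s) (g₀ ^ (a - 1) * Fs)
            (by rw [← mul_assoc, hpow])
          refine hgood ?_
          have e1 : g₀ ^ (a - 1) * Fs = (g₀ ^ (a - 1) * Fs) * (u * g₀ ^ a + v * Fs) := by
            rw [huv, mul_one]
          rw [e1, mul_add, map_add, LinearMap.add_apply]
          have e2 : g₀ ^ (a - 1) * Fs * (u * g₀ ^ a) = (u * g₀ ^ (a - 1)) * (g₀ ^ a * Fs) := by
            ring
          have e3 : g₀ ^ (a - 1) * Fs * (v * Fs) = Fs * (g₀ ^ (a - 1) * (v * Fs)) := by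
            ring
          rw [e2, e3, aeval_kill K _ _ x hx0, aeval_kill K Fs _ x hzero, add_zero]
        · -- Φ Fs (Φ (u*g₀^a) x) = 0
          rw [← aeval_frobK_mul_apply]
          rw [show Fs * (u * g₀ ^ a) = u * (g₀ ^ a * Fs) by ring]
          exact aeval_kill K u _ x hx0
        · -- conditions for s
          intro g hg h hgh
          intro hzero
          rw [← aeval_frobK_mul_apply] at hzero
          have hgood := hxg g (Finset.mem_insert_of_mem hg) (h * g₀ ^ a)
            (by rw [← mul_assoc, hgh, mul_comm])
          refine hgood ?_
          have e1 : h * g₀ ^ a = (h * g₀ ^ a) * (u * g₀ ^ a + v * Fs) := by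
            rw [huv, mul_one]
          rw [e1, mul_add, map_add, LinearMap.add_apply]
          have e2 : h * g₀ ^ a * (u * g₀ ^ a) = g₀ ^ a * (h * (u * g₀ ^ a)) := by ring
          have e3 : h * g₀ ^ a * (v * Fs) = (v * h) * (g₀ ^ a * Fs) := by ring
          rw [e2, e3, aeval_kill K _ _ x hzero, aeval_kill K _ _ x hx0, add_zero]
      · -- InjOn
        intro x hx y hy hxy
        have h1 : aeval (frobK K) (v * Fs) x = aeval (frobK K) (v * Fs) y :=
          congrArg Prod.fst hxy
        have h2 : aeval (frobK K) (u * g₀ ^ a) x = aeval (frobK K) (u * g₀ ^ a) y :=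
          congrArg Prod.snd hxy
        rw [← hsplit x, ← hsplit y, h1, h2]
      · -- SurjOn
        rintro ⟨w, r⟩ ⟨⟨hw0, hw1⟩, hr0, hrg⟩
        refine ⟨w + r, ⟨?_, ?_⟩, ?_⟩
        · -- Φ (g₀^a * Fs) (w + r) = 0
          rw [LinearMap.map_add]
          have hwterm : aeval (frobK K) (g₀ ^ a * Fs) w = 0 := by
            rw [show g₀ ^ a * Fs = Fs * g₀ ^ a by ring]
            exact aeval_kill K Fs _ w hw0
          have hrterm : aeval (frobK K) (g₀ ^ a * Fs) r = 0 := aeval_kill K _ Fs r hr0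
          rw [hwterm, hrterm, add_zero]
        · -- goodness conditions for insert g₀ s
          intro g hg h hgh
          rcases Finset.mem_insert.mp hg with hgeq | hgmem
          · subst hgeq
            have hh : h = g ^ (a - 1) * Fs := by
              apply mul_left_cancel₀ hg₀ne
              rw [hgh, ← mul_assoc, hpow]
            rw [hh, LinearMap.map_add]
            have hrterm : aeval (frobK K) (g ^ (a - 1) * Fs) r = 0 :=
              aeval_kill K (g ^ (a - 1)) Fs r hr0
            rw [hrterm, add_zero]
            intro hzero
            refine hw1 ?_
            have e1 : (g ^ (a - 1) : K[X]) = g ^ (a - 1) * (u * g ^ a + v * Fs) := by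
              rw [huv, mul_one]
            rw [e1, mul_add, map_add, LinearMap.add_apply]
            have e2 : g ^ (a - 1) * (u * g ^ a) = (u * g ^ (a - 1)) * g ^ a := by ring
            have e3 : g ^ (a - 1) * (v * Fs) = v * (g ^ (a - 1) * Fs) := by ring
            rw [e2, e3, aeval_kill K _ _ w hw0, aeval_kill K v _ w hzero, add_zero]
          · have hgdvd : g ∣ Fs :=
              dvd_trans (dvd_pow_self g (by omega : a ≠ 0))
                (Finset.dvd_prod_of_mem (fun g => g ^ a) hgmem)
            obtain ⟨h', hh'⟩ := hgdvd
            have hh : h = g₀ ^ a * h' := by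
              apply mul_left_cancel₀ (hs' g hgmem).2.ne_zero
              rw [hgh, hh']; ring
            rw [hh, LinearMap.map_add]
            have hwterm : aeval (frobK K) (g₀ ^ a * h') w = 0 := by
              rw [show g₀ ^ a * h' = h' * g₀ ^ a by ring]
              exact aeval_kill K h' _ w hw0
            rw [hwterm, zero_add]
            intro hzero
            refine hrg g hgmem h' hh'.symm ?_
            have e1 : h' = h' * (u * g₀ ^ a + v * Fs) := by rw [huv, mul_one]
            rw [e1, mul_add, map_add, LinearMap.add_apply]
            have e2 : h' * (u * g₀ ^ a) = u * (g₀ ^ a * h') := by ring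
            have e3 : h' * (v * Fs) = (v * h') * Fs := by ring
            rw [e2, e3, aeval_kill K u _ r hzero, aeval_kill K _ Fs r hr0, add_zero]
        · -- image is (w, r)
          have h1 : aeval (frobK K) (v * Fs) (w + r) = w := by
            rw [LinearMap.map_add]
            have hrterm : aeval (frobK K) (v * Fs) r = 0 := aeval_kill K v Fs r hr0
            have huw : aeval (frobK K) (u * g₀ ^ a) w = 0 := aeval_kill K u _ w hw0
            have := hsplit w
            rw [huw, zero_add] at this
            rw [hrterm, add_zero, this]
          have h2 : aeval (frobK K) (u * g₀ ^ a) (w + r) = r := by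
            rw [LinearMap.map_add]
            have hwterm : aeval (frobK K) (u * g₀ ^ a) w = 0 := aeval_kill K u _ w hw0
            have hvr : aeval (frobK K) (v * Fs) r = 0 := aeval_kill K v Fs r hr0
            have := hsplit r
            rw [hvr, add_zero] at this
            rw [hwterm, zero_add, this]
          simp only [Prod.mk.injEq]
          exact ⟨h1, h2⟩
    calc S'.ncard = Nat.card ↥S' := (Nat.card_coe_set_eq _).symm
      _ = Nat.card ↥(T ×ˢ S) := Nat.card_congr (Set.BijOn.equiv _ hbij)
      _ = Nat.card (↥T × ↥S) := Nat.card_congr (Equiv.Set.prod T S)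
      _ = Nat.card ↥T * Nat.card ↥S := Nat.card_prod _ _
      _ = T.ncard * S.ncard := by rw [Nat.card_coe_set_eq, Nat.card_coe_set_eq]
      _ = (Fintype.card K ^ (a * g₀.natDegree) - Fintype.card K ^ ((a - 1) * g₀.natDegree)) *
          ∏ g ∈ s, (Fintype.card K ^ (a * g.natDegree) - Fintype.card K ^ ((a - 1) * g.natDegree)) := by
        rw [card_block K hN ha hE hg₀m hdvd₀, ih hs' hdvd']

end CRT2
section Subfields
variable {E : Type} [Field E] [Fintype E] [DecidableEq E]

lemma ncard_setOf_root_le (f : E[X]) (hf : f ≠ 0) :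
    {x : E | f.eval x = 0}.ncard ≤ f.natDegree := by
  have hsub : {x : E | f.eval x = 0} ⊆ ↑f.roots.toFinset := by
    intro x hx
    rw [Finset.mem_coe, Multiset.mem_toFinset, mem_roots']
    exact ⟨hf, hx⟩
  calc {x : E | f.eval x = 0}.ncard ≤ (↑f.roots.toFinset : Set E).ncard :=
        Set.ncard_le_ncard hsub (Set.toFinite _)
    _ = f.roots.toFinset.card := Set.ncard_coe_finset _
    _ ≤ Multiset.card f.roots := Multiset.toFinset_card_le _
    _ ≤ f.natDegree := card_roots' _

lemma ncard_finset_biUnion_le {α β : Type} [Fintype α] (s : Finset β) (t : β → Set α) :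
    (⋃ g ∈ s, t g).ncard ≤ ∑ g ∈ s, (t g).ncard := by
  classical
  induction s using Finset.induction_on with
  | empty => simp
  | @insert g₀ s hg₀ ih =>
    rw [Finset.set_biUnion_insert, Finset.sum_insert hg₀]
    exact (Set.ncard_union_le _ _).trans (Nat.add_le_add_left ih _)

/-- The subfield of fixed points of the `j`-th iterated Frobenius. -/
noncomputable def fixedSubfield (p j : ℕ) [Fact p.Prime] [CharP E p] : Subfield E where
  carrier := {x : E | x ^ p ^ j = x}
  mul_mem' := by
    intro a b ha hb
    simp only [Set.mem_setOf_eq] at *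
    rw [mul_pow, ha, hb]
  one_mem' := by simp
  add_mem' := by
    intro a b ha hb
    simp only [Set.mem_setOf_eq] at *
    rw [add_pow_char_pow, ha, hb]
  zero_mem' := by
    simp only [Set.mem_setOf_eq]
    exact zero_pow (pow_ne_zero j (Fact.out (p := p.Prime)).ne_zero)
  neg_mem' := by
    intro a ha
    simp only [Set.mem_setOf_eq] at *
    rw [neg_eq_neg_one_mul, mul_pow, neg_one_pow_char_pow, ha, neg_one_mul]
  inv_mem' := by
    intro a ha
    simp only [Set.mem_setOf_eq] at *
    rw [inv_pow, ha]

lemma natDegree_X_pow_sub_X {Q : ℕ} (hQ : 2 ≤ Q) :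
    ((X : E[X]) ^ Q - X).natDegree = Q := by
  have hd : (X : E[X]).degree < ((X : E[X]) ^ Q).degree := by
    rw [degree_X_pow, degree_X]
    exact_mod_cast hQ.trans_lt' (by norm_num)
  rw [natDegree_eq_of_degree_eq_some]
  rw [degree_sub_eq_left_of_degree_lt hd, degree_X_pow]

lemma X_pow_sub_X_ne_zero {Q : ℕ} (hQ : 2 ≤ Q) : ((X : E[X]) ^ Q - X) ≠ 0 := by
  intro h
  have := natDegree_X_pow_sub_X (E := E) hQ
  rw [h, natDegree_zero] at this
  omega

lemma X_pow_sub_X_dvd {Q t : ℕ} (hQ : 2 ≤ Q) (ht : 1 ≤ t) :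
    ((X : E[X]) ^ Q - X) ∣ (X : E[X]) ^ (Q ^ t) - X := by
  have h1 : (Q - 1) ∣ (Q ^ t - 1) := by
    have := Nat.sub_dvd_pow_sub_pow Q 1 t
    simpa using this
  obtain ⟨e, he⟩ := h1
  have h2 : ((X : E[X]) ^ (Q - 1) - 1) ∣ ((X : E[X]) ^ (Q ^ t - 1) - 1) := by
    have h3 := sub_dvd_pow_sub_pow ((X : E[X]) ^ (Q - 1)) 1 e
    rw [one_pow, ← pow_mul, ← he] at h3
    exact h3
  obtain ⟨c, hc⟩ := h2
  refine ⟨c, ?_⟩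
  have e1 : (X : E[X]) ^ Q - X = X * ((X : E[X]) ^ (Q - 1) - 1) := by
    rw [mul_sub, mul_one, ← pow_succ']
    congr 2
    omega
  have e2 : (X : E[X]) ^ (Q ^ t) - X = X * ((X : E[X]) ^ (Q ^ t - 1) - 1) := by
    rw [mul_sub, mul_one, ← pow_succ']
    congr 2
    have : 1 ≤ Q ^ t := Nat.one_le_pow _ _ (by omega)
    omega
  rw [e1, e2, hc, mul_assoc]

lemma card_fixedSubfield (p j t : ℕ) [Fact p.Prime] [CharP E p] (hj : 1 ≤ j) (ht : 1 ≤ t)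
    (hE : Fintype.card E = (p ^ j) ^ t) :
    Nat.card (fixedSubfield p j : Subfield E) = p ^ j := by
  set Q := p ^ j with hQdef
  have hp2 : 2 ≤ p := (Fact.out (p := p.Prime)).two_le
  have hQ : 2 ≤ Q := le_trans hp2 (Nat.le_self_pow (by omega) p)
  have hQt : 2 ≤ Q ^ t := hQ.trans (Nat.le_self_pow (by omega) Q)
  -- the fixed subfield is the root set of X^Q - X
  have hset : ((fixedSubfield p j : Subfield E) : Set E)
      = {x : E | ((X : E[X]) ^ Q - X).eval x = 0} := by
    ext x
    simp only [SetLike.mem_coe, Set.mem_setOf_eq, eval_sub, eval_pow, eval_X]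
    constructor
    · intro h; rw [show x ^ Q = x from h]; ring
    · intro h; have : x ^ Q = x := by linear_combination h
      exact this
  obtain ⟨R, hR⟩ := X_pow_sub_X_dvd (E := E) hQ ht
  have hne : ((X : E[X]) ^ Q - X) ≠ 0 := X_pow_sub_X_ne_zero hQ
  have hneT : ((X : E[X]) ^ (Q ^ t) - X) ≠ 0 := X_pow_sub_X_ne_zero hQt
  have hRne : R ≠ 0 := by rintro rfl; rw [mul_zero] at hR; exact hneT hR
  have hdegR : R.natDegree = Q ^ t - Q := by
    have := natDegree_mul (X_pow_sub_X_ne_zero (E := E) hQ) hRne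
    rw [← hR, natDegree_X_pow_sub_X hQt, natDegree_X_pow_sub_X hQ] at this
    omega
  -- everyone is a root of X^(Q^t) - X
  have hall : ∀ x : E, ((X : E[X]) ^ (Q ^ t) - X).eval x = 0 := by
    intro x
    rw [eval_sub, eval_pow, eval_X, ← hE, FiniteField.pow_card, sub_self]
  have hcover : (Set.univ : Set E) ⊆
      {x : E | ((X : E[X]) ^ Q - X).eval x = 0} ∪ {x : E | R.eval x = 0} := by
    intro x _
    have := hall x
    rw [hR, eval_mul] at this
    rcases mul_eq_zero.mp this with h | h
    · exact Or.inl h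
    · exact Or.inr h
  have hlow : Q ≤ {x : E | ((X : E[X]) ^ Q - X).eval x = 0}.ncard := by
    have h1 : (Set.univ : Set E).ncard = Q ^ t := by
      rw [Set.ncard_univ, Nat.card_eq_fintype_card, hE]
    have h2 := Set.ncard_le_ncard hcover (Set.toFinite _)
    have h3 := Set.ncard_union_le {x : E | ((X : E[X]) ^ Q - X).eval x = 0}
      {x : E | R.eval x = 0}
    have h4 := ncard_setOf_root_le R hRne
    rw [hdegR] at h4
    have h5 : Q ≤ Q ^ t := Nat.le_self_pow (by omega) Q
    omega
  have hup := ncard_setOf_root_le _ hne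
  rw [natDegree_X_pow_sub_X hQ] at hup
  have : Nat.card (fixedSubfield p j : Subfield E)
      = ((fixedSubfield p j : Subfield E) : Set E).ncard := rfl
  rw [this, hset]
  omega

lemma subfield_eq_of_card {Q : ℕ} (hQ : 2 ≤ Q) (K K' : Subfield E)
    (hK : Nat.card K = Q) (hK' : Nat.card K' = Q) : K = K' := by
  have key : ∀ L : Subfield E, Nat.card L = Q →
      (L : Set E) = {x : E | ((X : E[X]) ^ Q - X).eval x = 0} := by
    intro L hL
    haveI : Fintype L := Fintype.ofFinite L
    have hfc : Fintype.card L = Q := by rw [← Nat.card_eq_fintype_card, hL]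
    have hsub : (L : Set E) ⊆ {x : E | ((X : E[X]) ^ Q - X).eval x = 0} := by
      intro a ha
      have h1 : (⟨a, ha⟩ : L) ^ Q = ⟨a, ha⟩ := by
        rw [← hfc]; exact FiniteField.pow_card _
      have h2 : a ^ Q = a := by
        have := congrArg (Subtype.val) h1
        push_cast at this
        exact_mod_cast this
      simp only [Set.mem_setOf_eq, eval_sub, eval_pow, eval_X, h2, sub_self]
    refine Set.eq_of_subset_of_ncard_le hsub ?_ (Set.toFinite _)
    have := ncard_setOf_root_le ((X : E[X]) ^ Q - X) (X_pow_sub_X_ne_zero hQ)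
    rw [natDegree_X_pow_sub_X hQ] at this
    have hL2 : (L : Set E).ncard = Q := by
      rw [← hL]; rfl
    omega
  exact SetLike.ext' ((key K hK).trans (key K' hK').symm)

end Subfields
section Factors
open UniqueFactorizationMonoid
variable {F : Type} [Field F] [Fintype F] [DecidableEq F]

/-- The finset of monic irreducible factors. -/
noncomputable def monicFactors (f : F[X]) : Finset F[X] := (normalizedFactors f).toFinset

lemma mem_monicFactors_dvd {f g : F[X]} (hg : g ∈ monicFactors f) : g ∣ f :=
  UniqueFactorizationMonoid.dvd_of_mem_normalizedFactors (Multiset.mem_toFinset.mp hg)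

variable {p : ℕ} [Fact p.Prime] [CharP F p]

lemma cyclo_monic (m' : ℕ) (hm0 : 0 < m') : ((X : F[X]) ^ m' - 1).Monic := by
  have := monic_X_pow_sub_C (1 : F) hm0.ne'
  rwa [map_one] at this

lemma cyclo_natDegree (m' : ℕ) : (((X : F[X]) ^ m' - 1)).natDegree = m' := by
  simpa using natDegree_X_pow_sub_C (n := m') (r := (1 : F))

lemma cyclo_squarefree (m' : ℕ) (hm0 : 0 < m') (hpm : ¬ p ∣ m') :
    Squarefree ((X : F[X]) ^ m' - 1) := by
  have hcast : (m' : F) ≠ 0 := by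
    rw [Ne, CharP.cast_eq_zero_iff F p]
    exact hpm
  have hsep : ((X : F[X]) ^ m' - C 1).Separable := separable_X_pow_sub_C 1 hcast one_ne_zero
  rw [map_one] at hsep
  exact hsep.squarefree

lemma monicFactors_spec (m' : ℕ) (hm0 : 0 < m') :
    ∀ g ∈ monicFactors ((X : F[X]) ^ m' - 1), g.Monic ∧ Irreducible g := by
  intro g hg
  rw [monicFactors, Multiset.mem_toFinset] at hg
  have hirr := irreducible_of_normalized_factor g hg
  have hnorm := normalize_normalized_factor g hg
  have hmonic : g.Monic := by
    have := monic_normalize hirr.ne_zero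
    rwa [hnorm] at this
  exact ⟨hmonic, hirr⟩

lemma monicFactors_prod (m' : ℕ) (hm0 : 0 < m') (hpm : ¬ p ∣ m') :
    ∏ g ∈ monicFactors ((X : F[X]) ^ m' - 1), g = (X : F[X]) ^ m' - 1 := by
  set f := (X : F[X]) ^ m' - 1 with hf
  have hfm : f.Monic := cyclo_monic m' hm0
  have hnodup : (normalizedFactors f).Nodup :=
    (squarefree_iff_nodup_normalizedFactors hfm.ne_zero).mp (cyclo_squarefree m' hm0 hpm)
  have hval : (monicFactors f).val = normalizedFactors f := by
    rw [monicFactors, Multiset.toFinset_val, Multiset.Nodup.dedup hnodup]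
  have hprod : ∏ g ∈ monicFactors f, g = (normalizedFactors f).prod := by
    rw [Finset.prod, hval, Multiset.map_id']
  rw [hprod]
  have hmonicprod : ((normalizedFactors f).prod).Monic := by
    rw [← hprod]
    exact monic_prod_of_monic _ _ fun g hg => (monicFactors_spec m' hm0 g hg).1
  exact eq_of_monic_of_associated hmonicprod hfm (prod_normalizedFactors hfm.ne_zero)

lemma monicFactors_sum_natDegree (m' : ℕ) (hm0 : 0 < m') (hpm : ¬ p ∣ m') :
    ∑ g ∈ monicFactors ((X : F[X]) ^ m' - 1), g.natDegree = m' := by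
  have h := monicFactors_prod (F := F) (p := p) m' hm0 hpm
  have h2 : (∏ g ∈ monicFactors ((X : F[X]) ^ m' - 1), g).natDegree
      = ∑ g ∈ monicFactors ((X : F[X]) ^ m' - 1), g.natDegree :=
    natDegree_prod _ _ fun g hg => (monicFactors_spec m' hm0 g hg).2.ne_zero
  rw [h, cyclo_natDegree] at h2
  omega

lemma mem_monicFactors_of (m' : ℕ) (hm0 : 0 < m') (hpm : ¬ p ∣ m') {g : F[X]}
    (hgm : g.Monic) (hgi : Irreducible g) (hgd : g ∣ (X : F[X]) ^ m' - 1) :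
    g ∈ monicFactors ((X : F[X]) ^ m' - 1) := by
  set f := (X : F[X]) ^ m' - 1 with hf
  have hprime : Prime g := UniqueFactorizationMonoid.irreducible_iff_prime.mp hgi
  have hdvd : g ∣ ∏ g' ∈ monicFactors f, g' := by
    rw [monicFactors_prod m' hm0 hpm]; exact hgd
  obtain ⟨g', hg'mem, hgg'⟩ := hprime.exists_mem_finset_dvd hdvd
  obtain ⟨hg'm, hg'i⟩ := monicFactors_spec m' hm0 g' hg'mem
  have : g = g' := eq_of_monic_of_associated hgm hg'm (hgi.associated_of_dvd hg'i hgg')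
  rwa [this]

lemma linear_factors_card (m' : ℕ) (hm0 : 0 < m') (hpm : ¬ p ∣ m') :
    ((monicFactors ((X : F[X]) ^ m' - 1)).filter fun g => g.natDegree = 1).card
      = ((X : F[X]) ^ m' - 1).roots.toFinset.card := by
  set f := (X : F[X]) ^ m' - 1 with hf
  have hfm : f.Monic := cyclo_monic m' hm0
  refine Finset.card_bij (fun g _ => -(g.coeff 0)) ?_ ?_ ?_
  · intro g hg
    obtain ⟨hgmem, hgdeg⟩ := Finset.mem_filter.mp hg
    obtain ⟨hgm, hgi⟩ := monicFactors_spec m' hm0 g hgmem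
    have hgeq : g = X + C (g.coeff 0) := hgm.eq_X_add_C hgdeg
    rw [Multiset.mem_toFinset, mem_roots']
    refine ⟨hfm.ne_zero, ?_⟩
    have hdvd : (X - C (-(g.coeff 0))) ∣ f := by
      rw [map_neg, sub_neg_eq_add, ← hgeq]
      exact dvd_of_mem_normalizedFactors (by rwa [monicFactors, Multiset.mem_toFinset] at hgmem)
    exact (dvd_iff_isRoot).mp hdvd
  · intro g1 h1 g2 h2 heq
    obtain ⟨hm1, hd1⟩ := Finset.mem_filter.mp h1
    obtain ⟨hm2, hd2⟩ := Finset.mem_filter.mp h2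
    have e1 : g1 = X + C (g1.coeff 0) := (monicFactors_spec m' hm0 g1 hm1).1.eq_X_add_C hd1
    have e2 : g2 = X + C (g2.coeff 0) := (monicFactors_spec m' hm0 g2 hm2).1.eq_X_add_C hd2
    have : g1.coeff 0 = g2.coeff 0 := by
      have := congrArg Neg.neg heq
      simpa using this
    rw [e1, e2, this]
  · intro r hr
    rw [Multiset.mem_toFinset, mem_roots'] at hr
    refine ⟨X - C r, ?_, by simp⟩
    refine Finset.mem_filter.mpr ⟨?_, natDegree_X_sub_C r⟩
    exact mem_monicFactors_of m' hm0 hpm (monic_X_sub_C r) (irreducible_X_sub_C r)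
      ((dvd_iff_isRoot).mpr hr.2)

lemma roots_card_bound (m' : ℕ) (hm0 : 0 < m')
    (hnd : ¬ (Fintype.card F - 1) ∣ m') :
    2 * ((X : F[X]) ^ m' - 1).roots.toFinset.card ≤ Fintype.card F - 1 := by
  classical
  set f := (X : F[X]) ^ m' - 1 with hf
  have hfne : f ≠ 0 := (cyclo_monic m' hm0).ne_zero
  set H : Subgroup Fˣ := MonoidHom.ker (powMonoidHom m' : Fˣ →* Fˣ) with hH
  have hroot_iff : ∀ r : F, r ∈ f.roots.toFinset ↔ r ^ m' = 1 := by
    intro r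
    rw [Multiset.mem_toFinset, mem_roots']
    constructor
    · rintro ⟨-, hr⟩
      have : r ^ m' - 1 = 0 := by simpa [hf] using hr
      linear_combination this
    · intro h
      exact ⟨hfne, by simp [hf, IsRoot, h]⟩
  have hequiv : Nat.card H = f.roots.toFinset.card := by
    have e : ↥H ≃ {r : F // r ∈ f.roots.toFinset} := by
      refine ⟨fun u => ⟨(u : Fˣ), ?_⟩, fun r => ⟨Units.mk0 r.1 ?_, ?_⟩, ?_, ?_⟩
      · rw [hroot_iff]
        have hu : ((u : Fˣ) : F) ^ m' = ((((u : Fˣ) ^ m' : Fˣ)) : F) := by push_cast; rfl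
        have humem : (u : Fˣ) ^ m' = 1 := u.2
        rw [hu, humem, Units.val_one]
      · intro h0
        have := (hroot_iff r.1).mp r.2
        rw [h0] at this
        simp only [zero_pow hm0.ne'] at this
        exact zero_ne_one this
      · have := (hroot_iff r.1).mp r.2
        refine Units.ext ?_
        push_cast
        simp [this]
      · intro u
        refine Subtype.ext (Units.ext ?_)
        simp
      · intro r
        refine Subtype.ext ?_
        simp
    rw [Nat.card_congr e, Nat.card_eq_fintype_card, Fintype.card_coe]
  have hq2 : 2 ≤ Fintype.card F := Fintype.one_lt_card
  have hcardu : Nat.card Fˣ = Fintype.card F - 1 := by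
    rw [Nat.card_eq_fintype_card, Fintype.card_units]
  have hdvd : Nat.card H ∣ Fintype.card F - 1 := by
    have h := Subgroup.card_subgroup_dvd_card H
    rwa [hcardu] at h
  have hne : Nat.card H ≠ Fintype.card F - 1 := by
    intro heq
    have htop : H = ⊤ := by
      refine Subgroup.eq_top_of_card_eq H ?_
      rw [heq, hcardu]
    obtain ⟨ζ, hζ⟩ := IsCyclic.exists_generator (α := Fˣ)
    have hζH : ζ ∈ H := htop ▸ Subgroup.mem_top ζ
    have hζpow : ζ ^ m' = 1 := hζH
    have hord : orderOf ζ = Fintype.card F - 1 := by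
      rw [orderOf_eq_card_of_forall_mem_zpowers hζ, hcardu]
    exact hnd (hord ▸ orderOf_dvd_of_pow_eq_one hζpow)
  rw [← hequiv]
  obtain ⟨e, he⟩ := hdvd
  rcases Nat.eq_zero_or_pos (Nat.card H) with h0 | hpos
  · omega
  · have he2 : e ≠ 1 := by rintro rfl; rw [mul_one] at he; exact hne he.symm
    have he0 : e ≠ 0 := by
      rintro rfl
      rw [mul_zero] at he
      omega
    have hchain : 2 * Nat.card H ≤ Fintype.card F - 1 := by
      calc 2 * Nat.card H ≤ e * Nat.card H := Nat.mul_le_mul_right _ (by omega)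
        _ = Nat.card H * e := Nat.mul_comm _ _
        _ = Fintype.card F - 1 := he.symm
    omega

end Factors
section RealEst

lemma weierstrass_prod {ι : Type} (s : Finset ι) (x : ι → ℝ) (h0 : ∀ i ∈ s, 0 ≤ x i)
    (h1 : ∀ i ∈ s, x i ≤ 1) : 1 - ∑ i ∈ s, x i ≤ ∏ i ∈ s, (1 - x i) := by
  classical
  induction s using Finset.induction_on with
  | empty => simp
  | @insert i₀ s hi₀ ih =>
    rw [Finset.prod_insert hi₀, Finset.sum_insert hi₀]
    have hx0 : 0 ≤ x i₀ := h0 i₀ (Finset.mem_insert_self _ _)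
    have hx1 : x i₀ ≤ 1 := h1 i₀ (Finset.mem_insert_self _ _)
    have ihs : 1 - ∑ i ∈ s, x i ≤ ∏ i ∈ s, (1 - x i) :=
      ih (fun i hi => h0 i (Finset.mem_insert_of_mem hi))
        (fun i hi => h1 i (Finset.mem_insert_of_mem hi))
    have hsum0 : 0 ≤ ∑ i ∈ s, x i :=
      Finset.sum_nonneg fun i hi => h0 i (Finset.mem_insert_of_mem hi)
    nlinarith [mul_le_mul_of_nonneg_left ihs (by linarith : (0:ℝ) ≤ 1 - x i₀)]

lemma keyP0 (q : ℕ) (hq9 : 9 ≤ q) (hqodd : Odd q) (c₁ : ℕ) (hc : 2 * c₁ ≤ q - 1) :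
    (1/2 : ℝ) + 1/((q:ℝ)+1) ≤ (1 - 1/(q:ℝ))^c₁ := by
  have hqR : (9:ℝ) ≤ (q:ℝ) := by exact_mod_cast hq9
  have hbase0 : (0:ℝ) ≤ 1 - 1/(q:ℝ) := by
    rw [sub_nonneg]
    rw [div_le_one (by linarith)]
    linarith
  have hbase1 : 1 - 1/(q:ℝ) ≤ 1 := by
    have : (0:ℝ) ≤ 1/(q:ℝ) := by positivity
    linarith
  set d := (q - 1) / 2 with hd
  have h2d : 2 * d = q - 1 := by
    obtain ⟨j, hj⟩ := hqodd
    omega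
  have hcd : c₁ ≤ d := by omega
  have hAB : (1 - 1/(q:ℝ))^d ≤ (1 - 1/(q:ℝ))^c₁ := pow_le_pow_of_le_one hbase0 hbase1 hcd
  set B := (1 - 1/(q:ℝ))^d with hB
  have hB0 : 0 ≤ B := pow_nonneg hbase0 _
  -- B^2 = (1-1/q)^(q-1)
  have hBsq : B^2 = (1 - 1/(q:ℝ))^(q-1) := by
    rw [hB, ← pow_mul, Nat.mul_comm, h2d]
  -- (1-1/q)^(q-1) ≥ 1 / exp 1
  have hqm1 : (0:ℝ) < (q:ℝ) - 1 := by linarith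
  have hexp : (1 + 1/((q:ℝ)-1))^(q-1) ≤ Real.exp 1 := by
    have h1 : (1 + 1/((q:ℝ)-1)) ≤ Real.exp (1/((q:ℝ)-1)) := by
      have := Real.add_one_le_exp (1/((q:ℝ)-1))
      linarith
    have h2 : (1 + 1/((q:ℝ)-1))^(q-1) ≤ (Real.exp (1/((q:ℝ)-1)))^(q-1) :=
      pow_le_pow_left₀ (by positivity) h1 _
    refine h2.trans ?_
    rw [← Real.exp_nat_mul]
    have hcast : ((q - 1 : ℕ) : ℝ) = (q:ℝ) - 1 := by
      have : 1 ≤ q := by omega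
      push_cast [this]
      ring
    rw [hcast, mul_one_div, div_self hqm1.ne']
  have hprodone : (1 - 1/(q:ℝ)) * (1 + 1/((q:ℝ)-1)) = 1 := by
    field_simp
    ring
  have hpow_one : (1 - 1/(q:ℝ))^(q-1) * (1 + 1/((q:ℝ)-1))^(q-1) = 1 := by
    rw [← mul_pow, hprodone, one_pow]
  have hpos2 : (0:ℝ) < (1 + 1/((q:ℝ)-1))^(q-1) := by positivity
  have hBlow : 1 / Real.exp 1 ≤ (1 - 1/(q:ℝ))^(q-1) := by
    rw [div_le_iff₀ (Real.exp_pos 1)]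
    calc (1 - 1/(q:ℝ))^(q-1) * Real.exp 1
        ≥ (1 - 1/(q:ℝ))^(q-1) * (1 + 1/((q:ℝ)-1))^(q-1) := by
          apply mul_le_mul_of_nonneg_left hexp (pow_nonneg hbase0 _)
      _ = 1 := hpow_one
  have he : Real.exp 1 < 2.7182818286 := Real.exp_one_lt_d9
  have hBsq_low : (36:ℝ)/100 < B^2 := by
    rw [hBsq]
    have : (1:ℝ)/2.7182818286 < (1 - 1/(q:ℝ))^(q-1) := by
      refine lt_of_lt_of_le ?_ hBlow
      apply div_lt_div_of_pos_left one_pos (Real.exp_pos 1) he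
    nlinarith
  have hRHS : (1/2 : ℝ) + 1/((q:ℝ)+1) ≤ 3/5 := by
    have : 1/((q:ℝ)+1) ≤ 1/10 := by
      rw [div_le_div_iff₀ (by linarith) (by norm_num)]
      linarith
    linarith
  have hRHS0 : (0:ℝ) ≤ 1/2 + 1/((q:ℝ)+1) := by positivity
  have hBge : (1/2 : ℝ) + 1/((q:ℝ)+1) ≤ B := by
    nlinarith
  exact hBge.trans hAB

lemma endgame (A t c₀ : ℝ) (hc₀A : c₀ ≤ A) (hc₀ : c₀ ≤ 3/5) (ht0 : 0 ≤ t) (ht2 : t ≤ 2) :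
    c₀ - (96/100)*t ≤ A*(1 - t/2) - t/2 - t/8 := by
  by_cases hA : A ≤ 67/100
  · nlinarith
  · nlinarith [mul_nonneg (by linarith : (0:ℝ) ≤ 2 - t) (by linarith : (0:ℝ) ≤ A/2 - 67/200)]

end RealEst
section GSReal
variable {E : Type} [Field E] [Fintype E] [DecidableEq E] (K : Subfield E)

lemma GS_prod_real (q m a : ℕ) (hq : Fintype.card K = q) (hq2 : 2 ≤ q) (ha : 1 ≤ a)
    (s : Finset K[X]) (hs : ∀ g ∈ s, g.Monic ∧ Irreducible g)
    (hsum : ∑ g ∈ s, g.natDegree = m) (hm2q : (m:ℝ) < 2*(q:ℝ)^2) :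
    (q:ℝ)^(a*m) * ((1 - 1/(q:ℝ))^((s.filter fun g => g.natDegree = 1).card)
        * (1 - (m:ℝ)/(2*(q:ℝ)^2)))
      ≤ ((∏ g ∈ s, (Fintype.card K ^ (a * g.natDegree)
          - Fintype.card K ^ ((a-1) * g.natDegree)) : ℕ) : ℝ) := by
  classical
  have hqR : (2:ℝ) ≤ (q:ℝ) := by exact_mod_cast hq2
  have hq0 : (0:ℝ) < (q:ℝ) := by linarith
  -- cast the product
  have hfac : ∀ g ∈ s, ((Fintype.card K ^ (a * g.natDegree)
      - Fintype.card K ^ ((a-1) * g.natDegree) : ℕ) : ℝ)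
      = (q:ℝ)^(a * g.natDegree) * (1 - ((q:ℝ)⁻¹)^(g.natDegree)) := by
    intro g hg
    have hle : Fintype.card K ^ ((a-1) * g.natDegree) ≤ Fintype.card K ^ (a * g.natDegree) :=
      Nat.pow_le_pow_right (by omega) (Nat.mul_le_mul_right _ (by omega))
    rw [Nat.cast_sub hle, hq]
    push_cast
    have hsplit : a * g.natDegree = (a-1) * g.natDegree + g.natDegree := by
      cases a with
      | zero => omega
      | succ b => simp [Nat.succ_sub_one]; ring
    have hinv : (q:ℝ)^(g.natDegree) * ((q:ℝ)⁻¹)^(g.natDegree) = 1 := by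
      rw [← mul_pow, mul_inv_cancel₀ hq0.ne', one_pow]
    rw [mul_sub, mul_one, hsplit, pow_add, mul_assoc, hinv, mul_one]
  rw [Nat.cast_prod]
  rw [Finset.prod_congr rfl hfac, Finset.prod_mul_distrib]
  have hpowsum : ∏ g ∈ s, (q:ℝ)^(a * g.natDegree) = (q:ℝ)^(a*m) := by
    rw [Finset.prod_pow_eq_pow_sum, ← Finset.mul_sum, hsum]
  rw [hpowsum]
  refine mul_le_mul_of_nonneg_left ?_ (by positivity)
  -- now bound the product of (1 - x_g)
  have hx0 : ∀ g ∈ s, (0:ℝ) ≤ ((q:ℝ)⁻¹)^(g.natDegree) := by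
    intro g hg; positivity
  have hx1 : ∀ g ∈ s, ((q:ℝ)⁻¹)^(g.natDegree) ≤ 1 := by
    intro g hg
    refine pow_le_one₀ (by positivity) ?_
    rw [inv_le_one_iff₀]
    right; linarith
  rw [← Finset.prod_filter_mul_prod_filter_not s (fun g => g.natDegree = 1)]
  have hpart1 : ∏ g ∈ s.filter (fun g => g.natDegree = 1), (1 - ((q:ℝ)⁻¹)^(g.natDegree))
      = (1 - 1/(q:ℝ))^((s.filter fun g => g.natDegree = 1).card) := by
    rw [Finset.prod_congr rfl (fun g hg => ?_), Finset.prod_const]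
    rw [(Finset.mem_filter.mp hg).2, pow_one, one_div]
  rw [hpart1]
  have hbase0 : (0:ℝ) ≤ 1 - 1/(q:ℝ) := by
    rw [sub_nonneg, div_le_one hq0]; linarith
  refine mul_le_mul_of_nonneg_left ?_ (pow_nonneg hbase0 _)
  -- the non-linear part
  have hW := weierstrass_prod (s.filter (fun g => ¬ g.natDegree = 1))
    (fun g => ((q:ℝ)⁻¹)^(g.natDegree))
    (fun g hg => hx0 g (Finset.mem_filter.mp hg).1)
    (fun g hg => hx1 g (Finset.mem_filter.mp hg).1)
  refine le_trans ?_ hW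
  have hsum2 : ∑ g ∈ s.filter (fun g => ¬ g.natDegree = 1), ((q:ℝ)⁻¹)^(g.natDegree)
      ≤ (m:ℝ)/(2*(q:ℝ)^2) := by
    have hterm : ∀ g ∈ s.filter (fun g => ¬ g.natDegree = 1),
        ((q:ℝ)⁻¹)^(g.natDegree) ≤ (g.natDegree : ℝ) * ((q:ℝ)⁻¹)^2 / 2 := by
      intro g hg
      obtain ⟨hgs, hgd⟩ := Finset.mem_filter.mp hg
      have hd1 : 1 ≤ g.natDegree := (hs g hgs).2.natDegree_pos
      have hd2 : 2 ≤ g.natDegree := by omega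
      have e1 : ((q:ℝ)⁻¹)^(g.natDegree) = ((q:ℝ)⁻¹)^2 * ((q:ℝ)⁻¹)^(g.natDegree - 2) := by
        rw [← pow_add]; congr 1; omega
      have e2 : ((q:ℝ)⁻¹)^(g.natDegree - 2) ≤ 1 :=
        pow_le_one₀ (by positivity) (by rw [inv_le_one_iff₀]; right; linarith)
      have e3 : (1:ℝ) ≤ (g.natDegree : ℝ) / 2 := by
        rw [le_div_iff₀ (by norm_num)]
        exact_mod_cast by omega
      have h4 : ((q:ℝ)⁻¹)^(g.natDegree) ≤ ((q:ℝ)⁻¹)^2 := by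
        rw [e1]
        nlinarith [pow_nonneg (by positivity : (0:ℝ) ≤ (q:ℝ)⁻¹) 2]
      calc ((q:ℝ)⁻¹)^(g.natDegree) ≤ ((q:ℝ)⁻¹)^2 * 1 := by rw [mul_one]; exact h4
        _ ≤ ((q:ℝ)⁻¹)^2 * ((g.natDegree:ℝ)/2) := by
            refine mul_le_mul_of_nonneg_left e3 (by positivity)
        _ = (g.natDegree : ℝ) * ((q:ℝ)⁻¹)^2 / 2 := by ring
    calc ∑ g ∈ s.filter (fun g => ¬ g.natDegree = 1), ((q:ℝ)⁻¹)^(g.natDegree)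
        ≤ ∑ g ∈ s.filter (fun g => ¬ g.natDegree = 1),
            (g.natDegree : ℝ) * ((q:ℝ)⁻¹)^2 / 2 := Finset.sum_le_sum hterm
      _ = (∑ g ∈ s.filter (fun g => ¬ g.natDegree = 1), (g.natDegree : ℝ))
            * (((q:ℝ)⁻¹)^2 / 2) := by
          rw [Finset.sum_mul]
          exact Finset.sum_congr rfl fun g _ => by ring
      _ ≤ (m:ℝ) * (((q:ℝ)⁻¹)^2 / 2) := by
          have hsub : ∑ g ∈ s.filter (fun g => ¬ g.natDegree = 1), g.natDegree ≤ m := by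
            rw [← hsum]
            exact Finset.sum_le_sum_of_subset (Finset.filter_subset _ _)
          have : (∑ g ∈ s.filter (fun g => ¬ g.natDegree = 1), (g.natDegree : ℝ)) ≤ (m:ℝ) := by
            exact_mod_cast hsub
          have h2 : (0:ℝ) ≤ ((q:ℝ)⁻¹)^2 / 2 := by positivity
          nlinarith
      _ = (m:ℝ)/(2*(q:ℝ)^2) := by
          rw [inv_pow]
          field_simp
  linarith

end GSReal
section Levels
variable {E : Type} [Field E] [Fintype E] [DecidableEq E] (K : Subfield E)
variable {p : ℕ} [Fact p.Prime]

lemma cyclo_pow_eq (hcharK : CharP K p) {N e ml : ℕ} (hNml : N = p ^ e * ml) :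
    (X : K[X]) ^ N - 1 = ((X : K[X]) ^ ml - 1) ^ (p ^ e) := by
  haveI := hcharK
  rw [sub_pow_char_pow, one_pow, ← pow_mul, hNml, Nat.mul_comm]

lemma badK_bound (hcharK : CharP K p) {N e ml : ℕ} (hN0 : 0 < N)
    (hE : Fintype.card E = Fintype.card K ^ N)
    (hNml : N = p ^ e * ml) (hml0 : 0 < ml) (hpml : ¬ p ∣ ml) :
    {x : E | ∃ g h : K[X], g.Monic ∧ Irreducible g ∧ g * h = (X : K[X]) ^ N - 1 ∧
        aeval (frobK K) h x = 0}.ncard ≤ ml * Fintype.card K ^ (N - 1) := by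
  classical
  haveI := hcharK
  set f := (X : K[X]) ^ ml - 1 with hf
  set s := monicFactors f with hs
  have hcyc : (X : K[X]) ^ N - 1 = f ^ (p ^ e) := cyclo_pow_eq K hcharK hNml
  have hprodpow : ∏ g ∈ s, g ^ (p ^ e) = (X : K[X]) ^ N - 1 := by
    rw [Finset.prod_pow, monicFactors_prod ml hml0 hpml, ← hcyc]
  have hmem : ∀ g : K[X], g.Monic → Irreducible g → g ∣ (X : K[X]) ^ N - 1 → g ∈ s := by
    intro g hgm hgi hgd
    have hprime : Prime g := UniqueFactorizationMonoid.irreducible_iff_prime.mp hgi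
    rw [← hprodpow] at hgd
    obtain ⟨g', hg'mem, hgg'⟩ := hprime.exists_mem_finset_dvd hgd
    have hdg' : g ∣ g' := hprime.dvd_of_dvd_pow hgg'
    obtain ⟨hg'm, hg'i⟩ := monicFactors_spec ml hml0 g' hg'mem
    rwa [eq_of_monic_of_associated hgm hg'm (hgi.associated_of_dvd hg'i hdg')]
  have hsub : {x : E | ∃ g h : K[X], g.Monic ∧ Irreducible g ∧ g * h = (X : K[X]) ^ N - 1 ∧
      aeval (frobK K) h x = 0} ⊆
      ⋃ g ∈ s, {x : E | ∃ h : K[X], g * h = (X : K[X]) ^ N - 1 ∧ aeval (frobK K) h x = 0} := by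
    rintro x ⟨g, h, hgm, hgi, hgh, hx⟩
    refine Set.mem_biUnion (hmem g hgm hgi ⟨h, hgh.symm⟩) ⟨h, hgh, hx⟩
  refine (Set.ncard_le_ncard hsub (Set.toFinite _)).trans
    ((ncard_finset_biUnion_le s _).trans ?_)
  have hbound : ∀ g ∈ s, {x : E | ∃ h : K[X], g * h = (X : K[X]) ^ N - 1 ∧
      aeval (frobK K) h x = 0}.ncard ≤ Fintype.card K ^ (N - 1) := by
    intro g hg
    obtain ⟨hgm, hgi⟩ := monicFactors_spec ml hml0 g hg
    have hgdvd : g ∣ (X : K[X]) ^ N - 1 := by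
      refine dvd_trans (dvd_trans ?_ (dvd_pow_self f (pow_ne_zero e (Fact.out (p := p.Prime)).ne_zero))) ?_
      · exact mem_monicFactors_dvd hg
      · rw [← hcyc]
    obtain ⟨h₀, hh₀⟩ := hgdvd
    have hXN : ((X : K[X]) ^ N - 1).Monic := monic_X_pow_sub_one K hN0
    have hgne : g ≠ 0 := hgi.ne_zero
    have hseteq : {x : E | ∃ h : K[X], g * h = (X : K[X]) ^ N - 1 ∧ aeval (frobK K) h x = 0}
        = (LinearMap.ker (aeval (frobK K) h₀) : Set E) := by
      ext x
      simp only [Set.mem_setOf_eq, SetLike.mem_coe, LinearMap.mem_ker]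
      constructor
      · rintro ⟨h, hgh, hx⟩
        have : h = h₀ := mul_left_cancel₀ hgne (by rw [hgh, hh₀])
        rwa [← this]
      · intro hx
        exact ⟨h₀, hh₀.symm, hx⟩
    have hmon0 : h₀.Monic := hgm.of_mul_monic_left (hh₀ ▸ hXN)
    have hdvd0 : h₀ ∣ (X : K[X]) ^ N - 1 := ⟨g, by rw [hh₀]; ring⟩
    have hcard := card_ker_aeval K hN0 hE hmon0 hdvd0
    have hdeg : h₀.natDegree = N - g.natDegree := by
      have := natDegree_mul hgne hmon0.ne_zero
      rw [← hh₀, natDegree_X_pow_sub_one'] at this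
      omega
    rw [hseteq, ← Nat.card_coe_set_eq]
    have : Nat.card ↑(LinearMap.ker (aeval (frobK K) h₀) : Set E)
        = Nat.card (LinearMap.ker (aeval (frobK K) h₀)) := rfl
    rw [this, hcard, hdeg]
    refine Nat.pow_le_pow_right (by have := Fintype.one_lt_card (α := K); omega) ?_
    have := hgi.natDegree_pos
    omega
  refine (Finset.sum_le_card_nsmul s _ _ hbound).trans ?_
  rw [smul_eq_mul]
  refine Nat.mul_le_mul_right _ ?_
  calc s.card = ∑ _g ∈ s, 1 := by rw [Finset.sum_const, smul_eq_mul, Nat.mul_one]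
    _ ≤ ∑ g ∈ s, g.natDegree := Finset.sum_le_sum fun g hg =>
        (monicFactors_spec ml hml0 g hg).2.natDegree_pos
    _ = ml := monicFactors_sum_natDegree ml hml0 hpml

lemma badK_one_compl (hcharK : CharP K p) {N e ml : ℕ} (hN0 : 0 < N)
    (hE : Fintype.card E = Fintype.card K ^ N)
    (hNml : N = p ^ e * ml) (hml0 : 0 < ml) (hpml : ¬ p ∣ ml) :
    {x : E | ∃ g h : K[X], g.Monic ∧ Irreducible g ∧ g * h = (X : K[X]) ^ N - 1 ∧
        aeval (frobK K) h x = 0}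
      = {x : E | aeval (frobK K) (∏ g ∈ monicFactors ((X : K[X]) ^ ml - 1), g ^ (p ^ e)) x = 0 ∧
          ∀ g ∈ monicFactors ((X : K[X]) ^ ml - 1), ∀ h : K[X],
            g * h = (∏ g' ∈ monicFactors ((X : K[X]) ^ ml - 1), g' ^ (p ^ e)) →
              aeval (frobK K) h x ≠ 0}ᶜ := by
  classical
  haveI := hcharK
  set f := (X : K[X]) ^ ml - 1 with hf
  set s := monicFactors f with hs
  have hcyc : (X : K[X]) ^ N - 1 = f ^ (p ^ e) := cyclo_pow_eq K hcharK hNml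
  have hprodpow : ∏ g ∈ s, g ^ (p ^ e) = (X : K[X]) ^ N - 1 := by
    rw [Finset.prod_pow, monicFactors_prod ml hml0 hpml, ← hcyc]
  have hmem : ∀ g : K[X], g.Monic → Irreducible g → g ∣ (X : K[X]) ^ N - 1 → g ∈ s := by
    intro g hgm hgi hgd
    have hprime : Prime g := UniqueFactorizationMonoid.irreducible_iff_prime.mp hgi
    rw [← hprodpow] at hgd
    obtain ⟨g', hg'mem, hgg'⟩ := hprime.exists_mem_finset_dvd hgd
    have hdg' : g ∣ g' := hprime.dvd_of_dvd_pow hgg'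
    obtain ⟨hg'm, hg'i⟩ := monicFactors_spec ml hml0 g' hg'mem
    rwa [eq_of_monic_of_associated hgm hg'm (hgi.associated_of_dvd hg'i hdg')]
  ext x
  simp only [Set.mem_setOf_eq, Set.mem_compl_iff, not_and, not_forall]
  constructor
  · rintro ⟨g, h, hgm, hgi, hgh, hx⟩ _
    exact ⟨g, hmem g hgm hgi ⟨h, hgh.symm⟩, h, by rw [hprodpow]; exact hgh, by simp [hx]⟩
  · intro hcompl
    have hzero : aeval (frobK K) (∏ g ∈ s, g ^ (p ^ e)) x = 0 := by
      rw [hprodpow]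
      exact aeval_frobK_X_pow_sub_one K hE x
    obtain ⟨g, hgs, h, hgh, hx⟩ := hcompl hzero
    push_neg at hx
    obtain ⟨hgm, hgi⟩ := monicFactors_spec ml hml0 g hgs
    exact ⟨g, h, hgm, hgi, by rw [← hprodpow]; exact hgh, hx⟩

end Levels
section Char
variable {E : Type} [Field E] [Fintype E]

lemma charP_of_card_pow (p s : ℕ) (hp : p.Prime) (hcard : Fintype.card E = p ^ s)
    (hs : 0 < s) : CharP E p := by
  have h1 : CharP E (ringChar E) := ringChar.charP E
  obtain ⟨t, hprime, hcard'⟩ := FiniteField.card E (ringChar E)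
  have hdvd : ringChar E ∣ p := by
    refine hprime.dvd_of_dvd_pow (n := s) ?_
    rw [← hcard, hcard']
    exact dvd_pow_self _ (by exact_mod_cast t.2.ne')
  have : ringChar E = p := (Nat.prime_dvd_prime_iff_eq hprime hp).mp hdvd
  rwa [this] at h1

end Char

lemma ordCompl_of_coprime {p a b : ℕ} (hp : p.Prime) (hb0 : 0 < b) (hpb : ¬ p ∣ b) :
    (p ^ a * b) / p ^ ((p ^ a * b).factorization p) = b := by
  have hfac : (p ^ a * b).factorization p = a := by
    rw [Nat.factorization_mul (pow_ne_zero a hp.pos.ne') hb0.ne']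
    simp [hp.factorization_pow, Nat.factorization_eq_zero_of_not_dvd hpb]
  rw [hfac, Nat.mul_div_cancel_left _ (pow_pos hp.pos a)]

/-- Corollary 3.3(1): for `q ≥ 9` a power of the prime `p`, `n = p^ℓ·m` with `ℓ ≥ 1`,
`m` even, `1 ≤ m < 2q²`, `gcd(m,p) = 1` and `q - 1 ∤ m`,
`CN_q(n) ≥ q^n·(1/2 + 1/(q+1) - 0.96·m/q²)`. -/
theorem cn_corollary_wild_even (p q ℓ m : ℕ) (hp : p.Prime) (hq : ∃ k : ℕ, 0 < k ∧ q = p ^ k)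
    (hq9 : 9 ≤ q) (hℓ : 1 ≤ ℓ) (hm : 1 ≤ m) (hm2 : m < 2 * q ^ 2) (hmeven : Even m)
    (hcop : Nat.gcd m p = 1) (hnd : ¬ (q - 1) ∣ m)
    (E : Type) [Field E] [Fintype E] (hE : Fintype.card E = q ^ (p ^ ℓ * m)) :
    (CN q (p ^ ℓ * m) E : ℝ) ≥ (q : ℝ) ^ (p ^ ℓ * m) *
      (1 / 2 + 1 / ((q : ℝ) + 1) - 0.96 * m / (q : ℝ) ^ 2) := by
  classical
  obtain ⟨k, hk0, hqpk⟩ := hq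
  haveI hfp : Fact p.Prime := Fact.mk hp
  set n := p ^ ℓ * m with hn
  have hp2 : 2 ≤ p := hp.two_le
  have hpodd : ¬ p ∣ m := by
    intro hdvd
    have h1 : p ∣ Nat.gcd m p := Nat.dvd_gcd hdvd dvd_rfl
    rw [hcop] at h1
    have := Nat.le_of_dvd one_pos h1
    omega
  have hq2 : 2 ≤ q := by omega
  have hm02 : 2 ≤ m := by
    rcases hmeven with ⟨j, hj⟩
    omega
  have hn0 : 0 < n := Nat.mul_pos (Nat.pow_pos (by omega)) (by omega)
  have hn2le : 2 ≤ n := le_trans hm02 (Nat.le_mul_of_pos_left m (Nat.pow_pos (by omega)))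
  have hcardE : Fintype.card E = p ^ (k * n) := by rw [hE, hqpk, ← pow_mul]
  haveI hcharE : CharP E p :=
    charP_of_card_pow p (k * n) hp hcardE (Nat.mul_pos hk0 hn0)
  -- canonical subfields
  set Kl : ℕ → Subfield E := fun l => fixedSubfield p (k * l) with hKl
  have hKcard : ∀ l : ℕ, l ∣ n → Nat.card (Kl l) = q ^ l := by
    intro l hl
    have hl0 : 0 < l := Nat.pos_of_dvd_of_pos hl hn0
    have hN0 : 0 < n / l := Nat.div_pos (Nat.le_of_dvd hn0 hl) hl0
    have hcard2 : Fintype.card E = (p ^ (k * l)) ^ (n / l) := by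
      rw [hcardE, ← pow_mul]
      congr 1
      have h3 : l * (n / l) = n := Nat.mul_div_cancel' hl
      calc k * n = k * (l * (n / l)) := by rw [h3]
        _ = k * l * (n / l) := by ring
    have hcf := card_fixedSubfield p (k * l) (n / l)
      (Nat.one_le_iff_ne_zero.mpr (by positivity)) hN0 hcard2
    show Nat.card (fixedSubfield p (k * l) : Subfield E) = q ^ l
    rw [hcf, hqpk, ← pow_mul]
  have hKfcard : ∀ l : ℕ, l ∣ n → Fintype.card (Kl l) = q ^ l := by
    intro l hl
    rw [← Nat.card_eq_fintype_card, hKcard l hl]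
  have hcharKl : ∀ l : ℕ, CharP (Kl l) p :=
    fun l => RingHom.charP (Kl l).subtype Subtype.coe_injective p
  -- the good set
  set Good : Set E := {x : E | ∀ l : ℕ, l ∣ n → ∀ K : Subfield E, Nat.card K = q ^ l →
    ∀ g h : (↥K)[X], g.Monic → Irreducible g → g * h = (X : (↥K)[X]) ^ (n / l) - 1 →
      aeval (frobK K) h x ≠ 0} with hGood
  have hGoodCN : ∀ x ∈ Good, IsCompletelyNormal q n x := by
    intro x hx l hl K hK
    have hl0 : 0 < l := Nat.pos_of_dvd_of_pos hl hn0
    have hN0 : 0 < n / l := Nat.div_pos (Nat.le_of_dvd hn0 hl) hl0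
    have hKf : Fintype.card K = q ^ l := by rw [← Nat.card_eq_fintype_card, hK]
    have hEK : Fintype.card E = Fintype.card K ^ (n / l) := by
      rw [hKf, hE, ← pow_mul, Nat.mul_div_cancel' hl]
    obtain ⟨B, hB⟩ := basis_of_good K hN0 hEK x
      (fun g h hgm hgi hgh => hx l hl K hK g h hgm hgi hgh)
    exact ⟨B, fun i => by rw [hB i, hKf]⟩
  -- bad sets
  set BadL : ℕ → Set E := fun l => {x : E | ∃ K : Subfield E, Nat.card K = q ^ l ∧
    ∃ g h : (↥K)[X], g.Monic ∧ Irreducible g ∧ g * h = (X : (↥K)[X]) ^ (n / l) - 1 ∧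
      aeval (frobK K) h x = 0} with hBadL
  have hcompl : (⋃ l ∈ n.divisors, BadL l)ᶜ ⊆ Good := by
    intro x hx
    intro l hl K hK g h hgm hgi hgh h0
    refine hx (Set.mem_biUnion (Nat.mem_divisors.mpr ⟨hl, hn0.ne'⟩) ?_)
    exact ⟨K, hK, g, h, hgm, hgi, hgh, h0⟩
  -- counting: card E ≤ Good + sum of bads
  have hcount : Nat.card E ≤ Good.ncard + ∑ l ∈ n.divisors, (BadL l).ncard := by
    have h1 := Set.ncard_add_ncard_compl (⋃ l ∈ n.divisors, BadL l)
    have h2 : ((⋃ l ∈ n.divisors, BadL l)ᶜ).ncard ≤ Good.ncard :=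
      Set.ncard_le_ncard hcompl (Set.toFinite _)
    have h3 := ncard_finset_biUnion_le (α := E) n.divisors BadL
    omega
  -- identify BadL with the canonical subfield bad sets
  have hBadL_eq : ∀ l : ℕ, l ∣ n → BadL l = {x : E | ∃ g h : (↥(Kl l))[X], g.Monic ∧
      Irreducible g ∧ g * h = (X : (↥(Kl l))[X]) ^ (n / l) - 1 ∧
      aeval (frobK (Kl l)) h x = 0} := by
    intro l hl
    have hl0 : 0 < l := Nat.pos_of_dvd_of_pos hl hn0
    have hq2l : 2 ≤ q ^ l := by
      calc 2 ≤ q := hq2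
        _ = q ^ 1 := (pow_one q).symm
        _ ≤ q ^ l := Nat.pow_le_pow_right (by omega) hl0
    ext x
    constructor
    · rintro ⟨K, hK, g, h, hgm, hgi, hgh, hx⟩
      have hKeq : K = Kl l := subfield_eq_of_card hq2l K (Kl l) hK (hKcard l hl)
      subst hKeq
      exact ⟨g, h, hgm, hgi, hgh, hx⟩
    · rintro ⟨g, h, hgm, hgi, hgh, hx⟩
      exact ⟨Kl l, hKcard l hl, g, h, hgm, hgi, hgh, hx⟩
  -- the level-1 good set count
  set K1 := Kl 1 with hK1
  have hK1f : Fintype.card K1 = q := by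
    have := hKfcard 1 (one_dvd n)
    rwa [pow_one] at this
  haveI hcharK1 : CharP K1 p := hcharKl 1
  have hN1 : (0:ℕ) < n / 1 := by rw [Nat.div_one]; exact hn0
  have hE1 : Fintype.card E = Fintype.card K1 ^ (n / 1) := by
    rw [hK1f, hE, Nat.div_one]
  have hNml1 : n / 1 = p ^ ℓ * m := by rw [Nat.div_one]
  set s1 := monicFactors ((X : (↥K1)[X]) ^ m - 1) with hs1
  have hs1spec := monicFactors_spec (F := ↥K1) m (by omega)
  have hprodpow1 : ∏ g ∈ s1, g ^ (p ^ ℓ) = (X : (↥K1)[X]) ^ (n / 1) - 1 := by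
    rw [Finset.prod_pow, monicFactors_prod (p := p) m (by omega) hpodd,
      ← cyclo_pow_eq K1 hcharK1 hNml1]
  set GS : Set E := {x : E | aeval (frobK K1) (∏ g ∈ s1, g ^ (p ^ ℓ)) x = 0 ∧
      ∀ g ∈ s1, ∀ h : (↥K1)[X], g * h = (∏ g' ∈ s1, g' ^ (p ^ ℓ)) →
        aeval (frobK K1) h x ≠ 0} with hGS
  have hGScount : GS.ncard = ∏ g ∈ s1, (Fintype.card K1 ^ (p ^ ℓ * g.natDegree)
      - Fintype.card K1 ^ ((p ^ ℓ - 1) * g.natDegree)) := by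
    refine count_goodS K1 hN1 (Nat.one_le_pow _ _ (by omega)) hE1 s1
      (fun g hg => hs1spec g hg) ?_
    rw [hprodpow1]
  have hBad1 : (BadL 1).ncard = Nat.card E - GS.ncard ∧ GS.ncard ≤ Nat.card E := by
    have heq : BadL 1 = GSᶜ := by
      rw [hBadL_eq 1 (one_dvd n)]
      exact badK_one_compl K1 hcharK1 hN1 hE1 hNml1 (by omega) hpodd
    have h1 := Set.ncard_add_ncard_compl GS
    constructor
    · rw [heq]; omega
    · omega
  -- real-number bound for GS
  have hqR2 : (2:ℝ) ≤ (q:ℝ) := by exact_mod_cast hq2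
  have hqR9 : (9:ℝ) ≤ (q:ℝ) := by exact_mod_cast hq9
  have hq0R : (0:ℝ) < (q:ℝ) := by linarith
  have hmR : (1:ℝ) ≤ (m:ℝ) := by exact_mod_cast hm
  have hm2R : (m:ℝ) < 2*(q:ℝ)^2 := by exact_mod_cast hm2
  set c₁ := (s1.filter fun g => g.natDegree = 1).card with hc₁
  set A := (1 - 1/(q:ℝ))^c₁ with hA
  have hGSreal : (q:ℝ)^n * (A * (1 - (m:ℝ)/(2*(q:ℝ)^2))) ≤ (GS.ncard : ℝ) := by
    rw [hGScount]
    have := GS_prod_real K1 q m (p ^ ℓ) hK1f hq2 (Nat.one_le_pow _ _ (by omega)) s1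
      (fun g hg => hs1spec g hg) (monicFactors_sum_natDegree (p := p) m (by omega) hpodd) hm2R
    exact this
  -- bound on c₁
  have hc₁le : 2 * c₁ ≤ q - 1 := by
    rw [hc₁, linear_factors_card (p := p) m (by omega) hpodd]
    have := roots_card_bound (F := ↥K1) m (by omega) (by rwa [hK1f])
    rwa [hK1f] at this
  have hqodd : Odd q := by
    rw [hqpk]
    exact (hp.odd_of_ne_two (by rintro rfl; exact hpodd hmeven.two_dvd)).pow
  have hAc₀ : (1/2 : ℝ) + 1/((q:ℝ)+1) ≤ A := keyP0 q hq9 hqodd c₁ hc₁le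
  -- bounds for levels ≥ 2
  have hml_le : ∀ l ∈ (n.divisors.erase 1), ((BadL l).ncard : ℝ)
      ≤ (((n / l) / p ^ ((n / l).factorization p) : ℕ) : ℝ) * (q:ℝ)^(n - l) := by
    intro l hlmem
    obtain ⟨hl1, hlD⟩ := Finset.mem_erase.mp hlmem
    obtain ⟨hl, -⟩ := Nat.mem_divisors.mp hlD
    have hl0 : 0 < l := Nat.pos_of_dvd_of_pos hl hn0
    have hN0 : 0 < n / l := Nat.div_pos (Nat.le_of_dvd hn0 hl) hl0
    have hEl : Fintype.card E = Fintype.card (Kl l) ^ (n / l) := by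
      rw [hKfcard l hl, hE, ← pow_mul, Nat.mul_div_cancel' hl]
    have hb := badK_bound (Kl l) (hcharKl l) hN0 hEl
      (Nat.ordProj_mul_ordCompl_eq_self (n / l) p).symm
      (Nat.ordCompl_pos p hN0.ne') (Nat.not_dvd_ordCompl hp hN0.ne')
    rw [← hBadL_eq l hl] at hb
    have hqpow : Fintype.card (Kl l) ^ (n / l - 1) = q ^ (n - l) := by
      rw [hKfcard l hl, ← pow_mul]
      congr 1
      have h3 : l * (n / l) = n := Nat.mul_div_cancel' hl
      have hln : l ≤ n := Nat.le_of_dvd hn0 hl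
      calc l * (n / l - 1) = l * (n / l) - l := by rw [Nat.mul_sub_one]
        _ = n - l := by rw [h3]
    rw [hqpow] at hb
    calc ((BadL l).ncard : ℝ)
        ≤ (((n / l) / p ^ ((n / l).factorization p) * q ^ (n - l) : ℕ) : ℝ) := by
          exact_mod_cast hb
      _ = (((n / l) / p ^ ((n / l).factorization p) : ℕ) : ℝ) * (q:ℝ)^(n - l) := by
          push_cast; ring
  -- level 2 data
  have h2divn : (2:ℕ) ∣ n := Dvd.dvd.mul_left hmeven.two_dvd _
  have h1mem : 1 ∈ n.divisors := Nat.one_mem_divisors.mpr hn0.ne'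
  have h2mem : 2 ∈ n.divisors.erase 1 :=
    Finset.mem_erase.mpr ⟨by norm_num, Nat.mem_divisors.mpr ⟨h2divn, hn0.ne'⟩⟩
  have hm2eq : m / 2 * 2 = m := Nat.div_mul_cancel hmeven.two_dvd
  have hn2 : n / 2 = p ^ ℓ * (m / 2) := by
    have hh : n = (p ^ ℓ * (m / 2)) * 2 := by rw [mul_assoc, hm2eq]
    rw [hh, Nat.mul_div_cancel _ two_pos]
  have hpm2 : ¬ p ∣ m / 2 := fun hd => hpodd (hd.trans ⟨2, hm2eq.symm⟩)
  have hordCompl2 : (n / 2) / p ^ ((n / 2).factorization p) = m / 2 := by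
    rw [hn2]
    exact ordCompl_of_coprime hp (by omega) hpm2
  have hordn : ∀ l, l ∣ n → (n / l) / p ^ ((n / l).factorization p) ≤ m := by
    intro l hl
    have h1 : (n / l) / p ^ ((n / l).factorization p) ∣ n / p ^ (n.factorization p) :=
      Nat.ordCompl_dvd_ordCompl_of_dvd (Nat.div_dvd_of_dvd hl) p
    have h2 : n / p ^ (n.factorization p) = m := by
      rw [hn]
      exact ordCompl_of_coprime hp (by omega) hpodd
    rw [h2] at h1
    exact Nat.le_of_dvd (by omega) h1
  -- bound the sum over levels ≥ 2
  have hsum2 : ∑ l ∈ n.divisors.erase 1, ((BadL l).ncard : ℝ)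
      ≤ (m:ℝ)/2 * (q:ℝ)^(n-2) + (m:ℝ) * (q:ℝ)^(n-2)/8 := by
    rw [← Finset.add_sum_erase _ _ h2mem]
    refine add_le_add ?_ ?_
    · refine (hml_le 2 h2mem).trans ?_
      rw [hordCompl2]
      have hcast : ((m / 2 : ℕ) : ℝ) ≤ (m:ℝ)/2 := by
        rw [le_div_iff₀ (by norm_num : (0:ℝ) < 2)]
        exact_mod_cast Nat.div_mul_le_self m 2
      exact mul_le_mul_of_nonneg_right hcast (by positivity)
    · have hterm : ∀ l ∈ (n.divisors.erase 1).erase 2,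
          ((BadL l).ncard : ℝ) ≤ (m:ℝ) * (q:ℝ)^(n-l) := by
        intro l hlm
        have hlmem := Finset.mem_of_mem_erase hlm
        refine (hml_le l hlmem).trans ?_
        have hle := hordn l (Nat.mem_divisors.mp (Finset.mem_of_mem_erase hlmem)).1
        exact mul_le_mul_of_nonneg_right (by exact_mod_cast hle) (by positivity)
      refine (Finset.sum_le_sum hterm).trans ?_
      rw [← Finset.mul_sum]
      have hmem3 : ∀ l ∈ (n.divisors.erase 1).erase 2, 3 ≤ l ∧ l ≤ n := by
        intro l hlm
        have h2 := Finset.mem_erase.mp hlm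
        have h1 := Finset.mem_erase.mp h2.2
        obtain ⟨hdvd, -⟩ := Nat.mem_divisors.mp h1.2
        have hl0 : 0 < l := Nat.pos_of_dvd_of_pos hdvd hn0
        exact ⟨by omega, Nat.le_of_dvd hn0 hdvd⟩
      have himg : ∑ l ∈ (n.divisors.erase 1).erase 2, (q:ℝ)^(n-l)
          ≤ ∑ j ∈ Finset.range (n-2), (q:ℝ)^j := by
        rw [show ∑ l ∈ (n.divisors.erase 1).erase 2, (q:ℝ)^(n-l)
            = ∑ j ∈ ((n.divisors.erase 1).erase 2).image (fun l => n - l), (q:ℝ)^j from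
          (Finset.sum_image (fun x hx y hy hxy => by
            have := hmem3 x hx; have := hmem3 y hy; omega)).symm]
        refine Finset.sum_le_sum_of_subset_of_nonneg ?_ (fun j _ _ => by positivity)
        intro j hj
        rw [Finset.mem_image] at hj
        obtain ⟨l, hl, rfl⟩ := hj
        rw [Finset.mem_range]
        have := hmem3 l hl
        omega
      have hgeo : ∑ l ∈ (n.divisors.erase 1).erase 2, (q:ℝ)^(n-l) ≤ (q:ℝ)^(n-2)/8 := by
        refine himg.trans ?_
        rw [geom_sum_eq (by linarith : (q:ℝ) ≠ 1)]
        rw [div_le_div_iff₀ (by linarith) (by norm_num : (0:ℝ) < 8)]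
        have hpow1 : (1:ℝ) ≤ (q:ℝ)^(n-2) := one_le_pow₀ (by linarith)
        nlinarith
      calc (m:ℝ) * ∑ l ∈ (n.divisors.erase 1).erase 2, (q:ℝ)^(n-l)
          ≤ (m:ℝ) * ((q:ℝ)^(n-2)/8) := mul_le_mul_of_nonneg_left hgeo (by positivity)
        _ = (m:ℝ) * (q:ℝ)^(n-2)/8 := by ring
  -- assemble
  have hsplitD : ∑ l ∈ n.divisors, ((BadL l).ncard : ℝ)
      = ((BadL 1).ncard : ℝ) + ∑ l ∈ n.divisors.erase 1, ((BadL l).ncard : ℝ) :=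
    (Finset.add_sum_erase _ _ h1mem).symm
  have hGoodR : (GS.ncard : ℝ) - ((m:ℝ)/2 * (q:ℝ)^(n-2) + (m:ℝ)*(q:ℝ)^(n-2)/8)
      ≤ (Good.ncard : ℝ) := by
    have hc : (Nat.card E : ℝ) ≤ (Good.ncard : ℝ) + ∑ l ∈ n.divisors, ((BadL l).ncard : ℝ) := by
      exact_mod_cast hcount
    have hb1 : ((BadL 1).ncard : ℝ) = (Nat.card E : ℝ) - (GS.ncard : ℝ) := by
      rw [hBad1.1, Nat.cast_sub hBad1.2]
    rw [hsplitD, hb1] at hc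
    linarith [hsum2]
  have hCN : (Good.ncard : ℝ) ≤ (CN q n E : ℝ) := by
    have h1 : Good.ncard ≤ CN q n E := by
      have hsub : Good ⊆ {x : E | IsCompletelyNormal q n x} := fun x hx => hGoodCN x hx
      calc Good.ncard = Nat.card ↥Good := (Nat.card_coe_set_eq _).symm
        _ ≤ Nat.card {x : E | IsCompletelyNormal q n x} :=
            Nat.card_mono (Set.toFinite _) hsub
        _ = CN q n E := rfl
    exact_mod_cast h1
  rw [ge_iff_le]
  have hqn2R : (q:ℝ)^(n-2) = (q:ℝ)^n/(q:ℝ)^2 := by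
    rw [eq_div_iff (by positivity), ← pow_add]
    congr 1
    omega
  have ht2 : (m:ℝ)/(q:ℝ)^2 ≤ 2 := by
    rw [div_le_iff₀ (by positivity)]
    linarith
  have ht0 : (0:ℝ) ≤ (m:ℝ)/(q:ℝ)^2 := by positivity
  have hc₀ : (1/2 : ℝ) + 1/((q:ℝ)+1) ≤ 3/5 := by
    have h10 : (1:ℝ)/((q:ℝ)+1) ≤ 1/10 := by
      rw [div_le_div_iff₀ (by linarith) (by norm_num)]
      linarith
    linarith
  have hend := endgame A ((m:ℝ)/(q:ℝ)^2) ((1/2 : ℝ) + 1/((q:ℝ)+1)) hAc₀ hc₀ ht0 ht2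
  calc (q:ℝ)^n * (1/2 + 1/((q:ℝ)+1) - 0.96 * (m:ℝ)/(q:ℝ)^2)
      ≤ (q:ℝ)^n * (A*(1 - ((m:ℝ)/(q:ℝ)^2)/2) - ((m:ℝ)/(q:ℝ)^2)/2 - ((m:ℝ)/(q:ℝ)^2)/8) := by
        refine mul_le_mul_of_nonneg_left ?_ (by positivity)
        calc (1/2 : ℝ) + 1/((q:ℝ)+1) - 0.96 * (m:ℝ)/(q:ℝ)^2
            = 1/2 + 1/((q:ℝ)+1) - (96/100) * ((m:ℝ)/(q:ℝ)^2) := by ring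
          _ ≤ _ := hend
    _ = (q:ℝ)^n * (A * (1 - (m:ℝ)/(2*(q:ℝ)^2)))
        - ((m:ℝ)/2 * (q:ℝ)^(n-2) + (m:ℝ)*(q:ℝ)^(n-2)/8) := by
        rw [hqn2R]
        field_simp
        ring
    _ ≤ (GS.ncard : ℝ) - ((m:ℝ)/2 * (q:ℝ)^(n-2) + (m:ℝ)*(q:ℝ)^(n-2)/8) := by
        linarith [hGSreal]
    _ ≤ (Good.ncard : ℝ) := hGoodR
    _ ≤ (CN q n E : ℝ) := hCN
end

section
/- Let q be a prime power, n a positive integer, q' the square-free part of q^n−1, and r a divisor of q'. Let r_1, …, r_t be divisors of r such that gcd(r_i, r_j) = r_0 for all i ≠ j and lcm(r_1, …, r_t) = r. Then CN_q^r(n) ≥ Σ_{i=1}^t CN_q^{r_i}(n) − (t−1)·CN_q^{r_0}(n). -/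
open Polynomial

open Finset in
lemma sieve_count {α : Type} [DecidableEq α] {t : ℕ} (ht : 1 ≤ t)
    (A : Fin t → Finset α) (U T : Finset α)
    (hAU : ∀ i, A i ⊆ U) (hT : ∀ x ∈ U, x ∉ T → ∃ i, x ∉ A i) :
    ∑ i, (A i).card ≤ T.card + (t - 1) * U.card := by
  classical
  have key : ∑ i, (A i).card = ∑ x ∈ U, (univ.filter (fun i => x ∈ A i)).card := by
    have h1 : ∀ i, (A i).card = (U.filter (· ∈ A i)).card := by
      intro i
      congr 1
      rw [Finset.filter_mem_eq_inter, Finset.inter_eq_right.mpr (hAU i)]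
    simp_rw [h1, Finset.card_filter]
    exact Finset.sum_comm
  rw [key]
  have hbound : ∀ x ∈ U, (univ.filter (fun i => x ∈ A i)).card ≤
      if x ∈ T then t else t - 1 := by
    intro x hx
    split
    · calc (univ.filter (fun i => x ∈ A i)).card ≤ (univ : Finset (Fin t)).card :=
          Finset.card_filter_le _ _
        _ = t := by simp
    · next hxT =>
      obtain ⟨i, hi⟩ := hT x hx hxT
      calc (univ.filter (fun i => x ∈ A i)).card ≤ ((univ : Finset (Fin t)).erase i).card := by
            apply Finset.card_le_card
            intro j hj
            rw [Finset.mem_erase]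
            refine ⟨fun h => ?_, Finset.mem_univ _⟩
            subst h
            exact hi (Finset.mem_filter.mp hj).2
        _ = t - 1 := by rw [Finset.card_erase_of_mem (Finset.mem_univ i)]; simp
  calc ∑ x ∈ U, (univ.filter (fun i => x ∈ A i)).card
      ≤ ∑ x ∈ U, (if x ∈ T then t else t - 1) := Finset.sum_le_sum hbound
    _ = ∑ x ∈ U, ((t - 1) + if x ∈ T then 1 else 0) := by
        refine Finset.sum_congr rfl fun x _ => ?_
        split <;> omega
    _ = (t - 1) * U.card + (U.filter (· ∈ T)).card := by
        rw [Finset.sum_add_distrib, Finset.sum_const, smul_eq_mul, mul_comm, ← Finset.card_filter]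
    _ ≤ (t - 1) * U.card + T.card := by
        gcongr
        exact fun x hx => (Finset.mem_filter.mp hx).2
    _ = T.card + (t - 1) * U.card := by ring


/-- Proposition 5.2 (sieving inequality): if `r₁, …, r_t` are divisors of `r ∣ q'`
(`q'` the squarefree part of `q^n - 1`) with pairwise gcd `r₀` and lcm `r`, then
`CN_q^r(n) ≥ Σᵢ CN_q^{rᵢ}(n) - (t-1)·CN_q^{r₀}(n)`. -/
theorem sieving_inequality (q n r r₀ t : ℕ) (hq : IsPrimePow q) (hn : 0 < n)
    (hr : r ∣ natSqfreePart (q ^ n - 1))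
    (R : Fin t → ℕ) (hR : ∀ i, R i ∣ r)
    (hgcd : ∀ i j, i ≠ j → Nat.gcd (R i) (R j) = r₀)
    (hlcm : Finset.univ.lcm R = r)
    (E : Type) [Field E] [Fintype E] (hE : Fintype.card E = q ^ n) :
    (CNfree q n r E : ℝ) ≥
      (∑ i : Fin t, (CNfree q n (R i) E : ℝ)) - ((t : ℝ) - 1) * CNfree q n r₀ E := by
  classical
  have hcount : ∀ s : ℕ, CNfree q n s E =
      (Finset.univ.filter (fun x : E => IsFree s x ∧ IsCompletelyNormal q n x)).card := by
    intro s
    rw [CNfree, Nat.card_eq_fintype_card]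
    simp [Fintype.card_subtype]
  have hfree_dvd : ∀ (a b : ℕ), a ∣ b → ∀ x : E, IsFree b x → IsFree a x :=
    fun a b hab x hx d hd hy => hx d (hd.trans hab) hy
  rcases Nat.lt_or_ge t 2 with ht | ht
  · interval_cases t
    · -- t = 0
      simp only [Finset.univ_eq_empty, Finset.lcm_empty] at hlcm
      subst hlcm
      simp only [Finset.univ_eq_empty, Finset.sum_empty, Nat.cast_zero]
      have h : CNfree q n r₀ E ≤ CNfree q n 1 E := by
        rw [hcount, hcount]
        apply Finset.card_le_card
        intro x hx
        simp only [Finset.mem_filter] at *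
        exact ⟨hx.1, fun d hd _ => Nat.dvd_one.mp hd, hx.2.2⟩
      have := Nat.cast_le (α := ℝ) |>.mpr h
      linarith
    · -- t = 1
      have hr1 : R 0 = r := by
        have : (Finset.univ : Finset (Fin 1)) = {0} := rfl
        rw [this, Finset.lcm_singleton] at hlcm
        simpa using hlcm
      rw [Fin.sum_univ_one, hr1]
      push_cast
      linarith
  · -- t ≥ 2
    set P : ℕ → E → Prop := fun s x => IsFree s x ∧ IsCompletelyNormal q n x with hP
    set A : Fin t → Finset E := fun i => Finset.univ.filter (P (R i)) with hA
    set U : Finset E := Finset.univ.filter (P r₀) with hU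
    set T : Finset E := Finset.univ.filter (P r) with hT
    have hr₀dvd : ∀ i, r₀ ∣ R i := by
      intro i
      obtain ⟨j, hj⟩ : ∃ j : Fin t, j ≠ i := by
        rcases Nat.lt_or_ge 0 i.val with h | h
        · exact ⟨⟨0, by omega⟩, by simp [Fin.ext_iff]; omega⟩
        · exact ⟨⟨1, by omega⟩, by simp [Fin.ext_iff]; omega⟩
      rw [← hgcd i j (Ne.symm hj)]
      exact Nat.gcd_dvd_left _ _
    have hAU : ∀ i, A i ⊆ U := by
      intro i x hx
      simp only [hA, hU, Finset.mem_filter] at *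
      exact ⟨hx.1, hfree_dvd r₀ (R i) (hr₀dvd i) x hx.2.1, hx.2.2⟩
    have hTcond : ∀ x ∈ U, x ∉ T → ∃ i, x ∉ A i := by
      intro x hxU hxT
      rw [hU, Finset.mem_filter] at hxU
      obtain ⟨-, hf₀, hc⟩ := hxU
      have hnf : ¬ IsFree r x := by
        intro h
        exact hxT (Finset.mem_filter.mpr ⟨Finset.mem_univ _, h, hc⟩)
      rw [IsFree] at hnf
      push_neg at hnf
      obtain ⟨d, hdr, ⟨y, hy⟩, hd1⟩ := hnf
      obtain ⟨p, hp, hpd⟩ := Nat.exists_prime_and_dvd hd1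
      have hpr : p ∣ r := hpd.trans hdr
      have hlcmprod : r ∣ ∏ i : Fin t, R i := by
        rw [← hlcm]
        exact Finset.lcm_dvd fun i _ => Finset.dvd_prod_of_mem R (Finset.mem_univ i)
      obtain ⟨i, -, hpi⟩ := hp.prime.exists_mem_finset_dvd (hpr.trans hlcmprod)
      refine ⟨i, fun hxA => ?_⟩
      obtain ⟨-, hfi, -⟩ := Finset.mem_filter.mp hxA
      have : p = 1 := hfi p hpi ⟨y ^ (d / p), by
        rw [hy, ← pow_mul, Nat.div_mul_cancel hpd]⟩
      exact hp.ne_one this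
    have hkey := sieve_count (by omega) A U T hAU hTcond
    have hsum : (∑ i : Fin t, (CNfree q n (R i) E : ℝ)) = ∑ i : Fin t, ((A i).card : ℝ) := by
      refine Finset.sum_congr rfl fun i _ => ?_
      rw [hcount]
    rw [hsum, hcount r, hcount r₀]
    have hcast : ((∑ i, (A i).card : ℕ) : ℝ) ≤ (T.card : ℝ) + ((t - 1 : ℕ) : ℝ) * U.card := by
      exact_mod_cast hkey
    rw [Nat.cast_sum] at hcast
    have ht1 : ((t - 1 : ℕ) : ℝ) = (t : ℝ) - 1 := by
      have : 1 ≤ t := by omega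
      push_cast [this]
      ring
    rw [ht1] at hcast
    linarith
end

section
/- Let F_q be the finite field of characteristic p with q elements, and let n = p^ℓ·m with ℓ ≥ 0 and gcd(m, p) = 1. Then for every j with 0 ≤ j ≤ ℓ and every divisor d of m, 1 − φ_{p^j d}((X^{m/d}−1)^{p^{ℓ−j}})/q^{p^ℓ m} ≤ m/(d·q^{p^j d}), where φ_{p^j d} is the polynomial Euler function computed in F_{q^{p^j d}}[X] and (X^{m/d}−1)^{p^{ℓ−j}} = X^{n/(p^j d)} − 1 in F_{q^{p^j d}}[X]. -/
open Polynomial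

private lemma ncard_biUnion_le' {α β : Type*} [Finite β] (s : Finset α) (t : α → Set β) :
    (⋃ a ∈ s, t a).ncard ≤ ∑ a ∈ s, (t a).ncard := by
  classical
  induction s using Finset.induction_on with
  | empty => simp
  | insert _ _ h ih =>
    rw [Finset.set_biUnion_insert, Finset.sum_insert h]
    exact (Set.ncard_union_le _ _).trans (Nat.add_le_add le_rfl ih)

private noncomputable def unitsEquivIsUnit' {M : Type*} [Monoid M] : Mˣ ≃ {x : M // IsUnit x} where
  toFun u := ⟨u, u.isUnit⟩
  invFun x := x.2.unit
  left_inv u := Units.ext (by simp)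
  right_inv x := by simp

/-- Equation (3) of Section 3: for `q` a power of the prime `p`, `n = p^ℓ·m` with
`gcd(m,p) = 1`, any `0 ≤ j ≤ ℓ` and any divisor `d` of `m`, working in `K[X]` where
`K = F_{q^(p^j d)}`,
`1 - φ_{p^j d}((X^(m/d) - 1)^(p^(ℓ-j)))/q^(p^ℓ m) ≤ m/(d·q^(p^j d))`. -/
theorem one_sub_phi_ratio_le (p q ℓ m j d : ℕ) (hp : p.Prime)
    (hq : ∃ k : ℕ, 0 < k ∧ q = p ^ k) (hcop : Nat.gcd m p = 1)
    (hj : j ≤ ℓ) (hd : d ∣ m)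
    (K : Type) [Field K] [Fintype K] (hK : Fintype.card K = q ^ (p ^ j * d)) :
    1 - (polyPhi (((X : K[X]) ^ (m / d) - 1) ^ p ^ (ℓ - j)) : ℝ) / (q : ℝ) ^ (p ^ ℓ * m) ≤
      (m : ℝ) / ((d : ℝ) * (q : ℝ) ^ (p ^ j * d)) := by
  classical
  obtain ⟨k, hk0, hqk⟩ := hq
  have hm : 0 < m := by
    rcases Nat.eq_zero_or_pos m with h | h
    · subst h; simp [Nat.gcd_zero_left] at hcop; exact absurd hcop hp.ne_one
    · exact h
  have hd0 : 0 < d := Nat.pos_of_dvd_of_pos hd hm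
  set m' := m / d with hm'def
  have hdm : d * m' = m := Nat.mul_div_cancel' hd
  have hm' : 0 < m' := Nat.div_pos (Nat.le_of_dvd hm hd) hd0
  have hq1 : 1 < q := by
    rw [hqk]; exact Nat.one_lt_pow hk0.ne' hp.one_lt
  set e := p ^ (ℓ - j) with hedef
  have he : 0 < e := Nat.pow_pos hp.pos
  set g : K[X] := X ^ m' - 1 with hgdef
  have hgm : g.Monic := by
    have := monic_X_pow_sub_C (1 : K) hm'.ne'
    simpa [hgdef] using this
  have hg0 : g ≠ 0 := hgm.ne_zero
  set f : K[X] := g ^ e with hfdef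
  have hfm : f.Monic := hgm.pow e
  have hf0 : f ≠ 0 := hfm.ne_zero
  have hgdeg : g.natDegree = m' := by
    have := natDegree_X_pow_sub_C (n := m') (r := (1 : K))
    simpa [hgdef] using this
  set N := e * m' with hNdef
  have hN : 0 < N := Nat.mul_pos he hm'
  have hfdeg : f.natDegree = N := by rw [hfdef, natDegree_pow, hgdeg]
  set Q := Fintype.card K with hQdef
  have hQ1 : 1 < Q := Fintype.one_lt_card
  have hQ0 : 0 < Q := lt_trans Nat.zero_lt_one hQ1
  -- the quotient ring is finite of cardinality `Q ^ N`
  haveI : Fintype (AdjoinRoot f) := Module.fintypeOfFintype (AdjoinRoot.powerBasis' hfm).basis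
  have hcardR : Nat.card (AdjoinRoot f) = Q ^ N := by
    rw [Nat.card_eq_fintype_card, Module.card_fintype (AdjoinRoot.powerBasis' hfm).basis]
    simp [AdjoinRoot.powerBasis', hfdeg]
    rfl
  -- cardinality of spaces of polynomials of bounded degree
  have hdegLTcard : ∀ n : ℕ, ((degreeLT K n : Submodule K K[X]) : Set K[X]).ncard = Q ^ n := by
    intro n
    rw [← Nat.card_coe_set_eq]
    refine (Nat.card_congr ((Polynomial.degreeLTEquiv K n).toEquiv)).trans ?_
    simp [Nat.card_eq_fintype_card, hQdef]
  have hdegLTfin : ∀ n : ℕ, ((degreeLT K n : Submodule K K[X]) : Set K[X]).Finite := by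
    intro n
    exact Set.finite_coe_iff.mp (Finite.of_equiv _ (Polynomial.degreeLTEquiv K n).toEquiv.symm)
  -- the set of normalized irreducible factors of g
  set S : Finset K[X] := (UniqueFactorizationMonoid.normalizedFactors g).toFinset with hSdef
  have hSprime : ∀ P ∈ S, Prime P := by
    intro P hP
    exact UniqueFactorizationMonoid.prime_of_normalized_factor P (Multiset.mem_toFinset.mp hP)
  have hSdeg : ∀ P ∈ S, 0 < P.natDegree := fun P hP => (hSprime P hP).irreducible.natDegree_pos
  have hScard : S.card ≤ m' := by
    have hmono : ∀ x ∈ UniqueFactorizationMonoid.normalizedFactors g, Monic x := by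
      intro x hx
      have hx0 : x ≠ 0 := (UniqueFactorizationMonoid.prime_of_normalized_factor x hx).ne_zero
      have := UniqueFactorizationMonoid.normalize_normalized_factor x hx
      rw [← this]
      exact Polynomial.monic_normalize hx0
    have hprodmonic : ((UniqueFactorizationMonoid.normalizedFactors g).prod).Monic := by
      have := monic_multiset_prod_of_monic (UniqueFactorizationMonoid.normalizedFactors g) id
        (fun i hi => hmono i hi)
      simpa using this
    have hprod : (UniqueFactorizationMonoid.normalizedFactors g).prod = g :=
      Polynomial.eq_of_monic_of_associated hprodmonic hgm
        (UniqueFactorizationMonoid.prod_normalizedFactors hg0)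
    have hsum : ((UniqueFactorizationMonoid.normalizedFactors g).map natDegree).sum = m' := by
      rw [← Polynomial.natDegree_multiset_prod_of_monic _ hmono, hprod, hgdeg]
    calc S.card ≤ Multiset.card (UniqueFactorizationMonoid.normalizedFactors g) :=
          Multiset.toFinset_card_le _
      _ ≤ ((UniqueFactorizationMonoid.normalizedFactors g).map natDegree).sum := by
          have h1 : Multiset.card ((UniqueFactorizationMonoid.normalizedFactors g).map natDegree)
              • 1 ≤ ((UniqueFactorizationMonoid.normalizedFactors g).map natDegree).sum :=
            Multiset.card_nsmul_le_sum (by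
              intro x hx
              obtain ⟨y, hy, rfl⟩ := Multiset.mem_map.mp hx
              exact (UniqueFactorizationMonoid.prime_of_normalized_factor y
                hy).irreducible.natDegree_pos)
          simpa using h1
      _ = m' := hsum
  -- the covering sets
  set T : K[X] → Set (AdjoinRoot f) :=
    fun P => (fun c => AdjoinRoot.mk f (P * c)) ''
      ((degreeLT K (N - P.natDegree) : Submodule K K[X]) : Set K[X]) with hTdef
  -- every nonunit is covered
  have hcover : {x : AdjoinRoot f | IsUnit x}ᶜ ⊆ ⋃ P ∈ S, T P := by
    intro x hx
    obtain ⟨h, rfl⟩ := AdjoinRoot.mk_surjective x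
    have hnc : ¬ IsCoprime h f := by
      rintro ⟨a, b, hab⟩
      apply hx
      have h2 : AdjoinRoot.mk f a * AdjoinRoot.mk f h = 1 := by
        have h3 := congrArg (AdjoinRoot.mk f) hab
        simpa [map_add, map_mul, AdjoinRoot.mk_self] using h3
      exact IsUnit.of_mul_eq_one _ ((mul_comm _ _).trans h2)
    set G := EuclideanDomain.gcd h f with hGdef
    have hGu : ¬ IsUnit G := fun hu => hnc (EuclideanDomain.gcd_isUnit_iff.mp hu)
    have hG0 : G ≠ 0 := by
      intro h0
      exact hf0 ((EuclideanDomain.gcd_eq_zero_iff).mp h0).2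
    obtain ⟨P0, hP0irr, hP0G⟩ := WfDvdMonoid.exists_irreducible_factor hGu hG0
    have hP0prime : Prime P0 := UniqueFactorizationMonoid.irreducible_iff_prime.mp hP0irr
    have hP0h : P0 ∣ h := hP0G.trans (EuclideanDomain.gcd_dvd_left h f)
    have hP0f : P0 ∣ f := hP0G.trans (EuclideanDomain.gcd_dvd_right h f)
    have hP0g : P0 ∣ g := hP0prime.dvd_of_dvd_pow (hfdef ▸ hP0f)
    obtain ⟨P, hPmem, hPassoc⟩ :=
      UniqueFactorizationMonoid.exists_mem_normalizedFactors_of_dvd hg0 hP0irr hP0g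
    have hPS : P ∈ S := Multiset.mem_toFinset.mpr hPmem
    have hP0 : P ≠ 0 := (UniqueFactorizationMonoid.prime_of_normalized_factor P hPmem).ne_zero
    set h' := h %ₘ f with hh'def
    have hmkeq : AdjoinRoot.mk f h = AdjoinRoot.mk f h' := by
      rw [AdjoinRoot.mk_eq_mk, hh'def, modByMonic_eq_sub_mul_div h f]
      exact ⟨h /ₘ f, by ring⟩
    have hPh' : P ∣ h' := by
      have hP0h' : P0 ∣ h' := by
        rw [hh'def, modByMonic_eq_sub_mul_div h f]
        exact dvd_sub hP0h (hP0f.trans (Dvd.intro _ rfl))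
      exact (hPassoc.symm.dvd).trans hP0h'
    obtain ⟨c, hc⟩ := hPh'
    have hcmem : c ∈ (degreeLT K (N - P.natDegree) : Submodule K K[X]) := by
      rw [Polynomial.mem_degreeLT]
      rcases eq_or_ne c 0 with rfl | hc0
      · rw [Polynomial.degree_zero]
        exact WithBot.bot_lt_coe _
      · have hh'0 : h' ≠ 0 := by
          intro h0
          rw [h0] at hc
          exact hc0 ((mul_eq_zero.mp hc.symm).resolve_left hP0)
        have hdeglt : h'.degree < f.degree := degree_modByMonic_lt h hfm
        have hnd : h'.natDegree < N := by
          rw [← hfdeg]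
          exact natDegree_lt_natDegree hh'0 hdeglt
        have hndmul : h'.natDegree = P.natDegree + c.natDegree := by
          rw [hc, natDegree_mul hP0 hc0]
        have hlt : c.natDegree < N - P.natDegree := by omega
        exact (natDegree_lt_iff_degree_lt hc0).mp hlt
    exact Set.mem_iUnion₂.mpr ⟨P, hPS, ⟨c, hcmem, by show AdjoinRoot.mk f (P * c) = AdjoinRoot.mk f h; rw [← hc, ← hmkeq]⟩⟩
  -- cardinality of each covering set
  have hTcard : ∀ P ∈ S, (T P).ncard ≤ Q ^ (N - 1) := by
    intro P hP
    calc (T P).ncard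
        ≤ ((degreeLT K (N - P.natDegree) : Submodule K K[X]) : Set K[X]).ncard :=
          Set.ncard_image_le (hdegLTfin _)
      _ = Q ^ (N - P.natDegree) := hdegLTcard _
      _ ≤ Q ^ (N - 1) :=
          Nat.pow_le_pow_right hQ0 (Nat.sub_le_sub_left (hSdeg P hP) N)
  -- counting units
  have hunits : {x : AdjoinRoot f | IsUnit x}.ncard = Nat.card (AdjoinRoot f)ˣ := by
    rw [← Nat.card_coe_set_eq]
    exact (Nat.card_congr (unitsEquivIsUnit' (M := AdjoinRoot f))).symm
  have hsplit : {x : AdjoinRoot f | IsUnit x}.ncard + {x : AdjoinRoot f | IsUnit x}ᶜ.ncard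
      = Q ^ N := by
    rw [Set.ncard_add_ncard_compl, hcardR]
  have hnonunits : {x : AdjoinRoot f | IsUnit x}ᶜ.ncard ≤ m' * Q ^ (N - 1) :=
    calc {x : AdjoinRoot f | IsUnit x}ᶜ.ncard
        ≤ (⋃ P ∈ S, T P).ncard := Set.ncard_le_ncard hcover (Set.toFinite _)
      _ ≤ ∑ P ∈ S, (T P).ncard := ncard_biUnion_le' S T
      _ ≤ ∑ _P ∈ S, Q ^ (N - 1) := Finset.sum_le_sum hTcard
      _ = S.card * Q ^ (N - 1) := by rw [Finset.sum_const, smul_eq_mul]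
      _ ≤ m' * Q ^ (N - 1) := Nat.mul_le_mul_right _ hScard
  have hphi : polyPhi f = Nat.card (AdjoinRoot f)ˣ := rfl
  have key : Q ^ N ≤ polyPhi f + m' * Q ^ (N - 1) := by
    rw [hphi, ← hunits]
    omega
  -- now the real arithmetic
  have hpe : p ^ j * e = p ^ ℓ := by
    rw [hedef, ← pow_add]
    congr 1
    omega
  have hQN : q ^ (p ^ ℓ * m) = Q ^ N := by
    calc q ^ (p ^ ℓ * m) = q ^ (p ^ j * d * N) := by
          congr 1
          calc p ^ ℓ * m = (p ^ j * e) * (d * m') := by rw [hpe, hdm]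
            _ = p ^ j * d * N := by rw [hNdef]; ring
      _ = (q ^ (p ^ j * d)) ^ N := by rw [← pow_mul]
      _ = Q ^ N := by rw [← hK]
  have hQR : (0 : ℝ) < (Q : ℝ) := by exact_mod_cast hQ0
  have hQNR : ((q : ℝ)) ^ (p ^ ℓ * m) = (Q : ℝ) ^ N := by
    exact_mod_cast congrArg (Nat.cast : ℕ → ℝ) hQN
  have hQjdR : ((q : ℝ)) ^ (p ^ j * d) = (Q : ℝ) := by
    exact_mod_cast congrArg (Nat.cast : ℕ → ℝ) hK.symm
  rw [hQNR, hQjdR, sub_le_iff_le_add]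
  have hrhs : (m : ℝ) / ((d : ℝ) * (Q : ℝ)) = (m' : ℝ) / (Q : ℝ) := by
    rw [← hdm]
    push_cast
    rw [mul_div_mul_left _ _ (by exact_mod_cast hd0.ne' : (d : ℝ) ≠ 0)]
  rw [hrhs]
  have hQNsplit : (Q : ℝ) ^ N = (Q : ℝ) ^ (N - 1) * (Q : ℝ) := by
    rw [← pow_succ]
    congr 1
    omega
  have hkeyR : (Q : ℝ) ^ N ≤ (polyPhi f : ℝ) + (m' : ℝ) * (Q : ℝ) ^ (N - 1) := by
    exact_mod_cast key
  calc (1 : ℝ) = (Q : ℝ) ^ N / (Q : ℝ) ^ N := (div_self (by positivity)).symm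
    _ ≤ ((polyPhi f : ℝ) + (m' : ℝ) * (Q : ℝ) ^ (N - 1)) / (Q : ℝ) ^ N := by
        gcongr
    _ = (m' : ℝ) / (Q : ℝ) + (polyPhi f : ℝ) / (Q : ℝ) ^ N := by
        rw [add_div, add_comm]
        congr 1
        rw [hQNsplit]
        field_simp
    _ = (m' : ℝ) / (Q : ℝ) + (polyPhi f : ℝ) / (Q : ℝ) ^ N := rfl
end
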